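/- arXiv:1510.04193 — 9 statements merged into one kernel-verified Lean document; each statement's English description precedes it below -/
import Mathlib

section
/- Let 0 < a < b be real numbers and let b₁, …, bₙ > 0 with b = b₁ + ⋯ + bₙ. Then there is a real r > 0 (one may take r = (b − a)/n) with the following property: for every m and all reals a₁, …, a_m with 0 < aᵢ ≤ r for each i and a₁ + ⋯ + a_m = a, there exist pairwise disjoint (possibly empty) sets I₁, …, Iₙ with I₁ ∪ ⋯ ∪ Iₙ = {1, …, m} such that for every k = 1, …, n one has ∑_{i ∈ I_k} aᵢ < b_k. -/
open Finset

lemma amphorae_aux (n : ℕ) (r : ℝ) (hr : 0 < r) (C : Fin n → ℝ) (hC : ∀ k, 0 < C k) :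
    ∀ (m : ℕ) (A : Fin m → ℝ), (∀ i, 0 < A i) → (∀ i, A i ≤ r) →
      (∑ i, A i) + n * r ≤ ∑ k, C k →
      ∃ I : Fin n → Finset (Fin m),
        (∀ k l, k ≠ l → Disjoint (I k) (I l)) ∧
        (∀ i, ∃ k, i ∈ I k) ∧
        (∀ k, ∑ i ∈ I k, A i < C k) := by
  intro m
  induction m with
  | zero =>
    intro A _ _ _
    exact ⟨fun _ => ∅, by simp, fun i => i.elim0, by simpa using hC⟩
  | succ m ih =>
    intro A hpos hle hsum
    have hlastpos := hpos (Fin.last m)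
    have hsum' : (∑ i, A i) = (∑ j : Fin m, A j.castSucc) + A (Fin.last m) :=
      Fin.sum_univ_castSucc A
    obtain ⟨I', hdisj, hcov, hlt⟩ := ih (fun j => A j.castSucc)
      (fun j => hpos _) (fun j => hle _) (by push_cast at hsum ⊢; linarith)
    -- total of assigned sums equals the total of the first m values
    have htot : (∑ k, ∑ j ∈ I' k, A j.castSucc) = ∑ j : Fin m, A j.castSucc := by
      have huniv : (univ : Finset (Fin n)).biUnion I' = univ := by
        apply Finset.eq_univ_of_forall
        intro j
        obtain ⟨k, hk⟩ := hcov j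
        exact Finset.mem_biUnion.mpr ⟨k, mem_univ k, hk⟩
      calc (∑ k, ∑ j ∈ I' k, A j.castSucc)
          = ∑ j ∈ (univ : Finset (Fin n)).biUnion I', A j.castSucc := by
            rw [Finset.sum_biUnion]
            intro k _ l _ hkl
            exact hdisj k l hkl
        _ = ∑ j : Fin m, A j.castSucc := by rw [huniv]
    -- there is a barrel with room ≥ r
    have hex : ∃ k₀, ∑ j ∈ I' k₀, A j.castSucc < C k₀ - r := by
      by_contra h
      push_neg at h
      have h1 : (∑ k, (C k - r)) ≤ ∑ k, ∑ j ∈ I' k, A j.castSucc :=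
        Finset.sum_le_sum fun k _ => h k
      rw [Finset.sum_sub_distrib, Finset.sum_const, Finset.card_univ,
        Fintype.card_fin, nsmul_eq_mul] at h1
      rw [htot] at h1
      push_cast at hsum
      linarith
    obtain ⟨k₀, hk₀⟩ := hex
    classical
    set emb : Fin m ↪ Fin (m + 1) := ⟨Fin.castSucc, Fin.castSucc_injective m⟩ with hemb
    have hlast_not : ∀ k, Fin.last m ∉ (I' k).map emb := by
      intro k hmem
      obtain ⟨j, _, hj⟩ := Finset.mem_map.mp hmem
      exact absurd hj (Fin.castSucc_lt_last j).ne
    refine ⟨fun k => if k = k₀ then insert (Fin.last m) ((I' k).map emb)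
      else (I' k).map emb, ?_, ?_, ?_⟩
    · intro k l hkl
      have hbase : Disjoint ((I' k).map emb) ((I' l).map emb) :=
        Finset.disjoint_map emb |>.mpr (hdisj k l hkl)
      simp only [Finset.disjoint_left]
      intro x hx hx'
      have hxk : x ∈ insert (Fin.last m) ((I' k).map emb) := by
        by_cases hk : k = k₀ <;> simp_all
      have hxl : x ∈ insert (Fin.last m) ((I' l).map emb) := by
        by_cases hl : l = k₀ <;> simp_all
      rcases Finset.mem_insert.mp hxk with h1 | h1 <;>
        rcases Finset.mem_insert.mp hxl with h2 | h2
      · subst h1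
        by_cases hk : k = k₀ <;> by_cases hl : l = k₀
        · exact hkl (hk.trans hl.symm)
        · simp only [if_neg hl] at hx'; exact hlast_not l hx'
        · simp only [if_neg hk] at hx; exact hlast_not k hx
        · simp only [if_neg hk] at hx; exact hlast_not k hx
      · subst h1; exact hlast_not l h2
      · subst h2; exact hlast_not k h1
      · exact (Finset.disjoint_left.mp hbase h1) h2
    · intro i
      refine Fin.lastCases ?_ ?_ i
      · exact ⟨k₀, by simp⟩
      · intro j
        obtain ⟨k, hk⟩ := hcov j
        refine ⟨k, ?_⟩
        have hmem : (emb j) ∈ (I' k).map emb := Finset.mem_map_of_mem emb hk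
        by_cases hkk : k = k₀
        · simp only [if_pos hkk]
          exact Finset.mem_insert_of_mem hmem
        · simp only [if_neg hkk]
          exact hmem
    · intro k
      have hmap : (∑ i ∈ (I' k).map emb, A i) = ∑ j ∈ I' k, A j.castSucc :=
        Finset.sum_map (I' k) emb A
      show (∑ i ∈ (if k = k₀ then insert (Fin.last m) ((I' k).map emb)
        else (I' k).map emb), A i) < C k
      by_cases hkk : k = k₀
      · subst hkk
        rw [if_pos rfl, Finset.sum_insert (hlast_not k), hmap]
        have := hle (Fin.last m)
        linarith
      · rw [if_neg hkk, hmap]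
        exact hlt k

/-- **The amphorae-into-barrels lemma, part (a).**
Given `0 < a < b` and positive reals `b₁, …, bₙ` summing to `b`, there is `r > 0`
such that any finite family of positive reals `a₁, …, a_m`, each `≤ r`, summing to `a`,
can be split into pairwise disjoint (possibly empty) sets `I₁ ∪ ⋯ ∪ Iₙ = {1, …, m}`
with `∑_{i ∈ I_k} aᵢ < b_k` for every `k`. -/
theorem stmt_1 (a b : ℝ) (ha : 0 < a) (hab : a < b)
    (n : ℕ) (B : Fin n → ℝ) (hB : ∀ k, 0 < B k) (hBsum : ∑ k, B k = b) :
    ∃ r > (0 : ℝ), ∀ (m : ℕ) (A : Fin m → ℝ),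
      (∀ i, 0 < A i) → (∀ i, A i ≤ r) → ∑ i, A i = a →
      ∃ I : Fin n → Finset (Fin m),
        (∀ k l, k ≠ l → Disjoint (I k) (I l)) ∧
        (∀ i : Fin m, ∃ k, i ∈ I k) ∧
        (∀ k, ∑ i ∈ I k, A i < B k) := by
  have hn : 0 < n := by
    rcases Nat.eq_zero_or_pos n with h | h
    · subst h; simp at hBsum; linarith
    · exact h
  have hn' : (0 : ℝ) < n := by exact_mod_cast hn
  refine ⟨(b - a) / n, div_pos (by linarith) hn', ?_⟩
  intro m A hpos hle hsum
  apply amphorae_aux n ((b - a) / n) (div_pos (by linarith) hn') B hB m A hpos hle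
  rw [hsum, hBsum]
  field_simp
  linarith
end

section
/- Let 0 < A < B be real numbers and let A₁, …, A_N > 0 with A = A₁ + ⋯ + A_N. Then there is a real R > 0 (for N ≥ 2 one may take R = (B − A)/(N − 1)) with the following property: for every M and all reals B₁, …, B_M with 0 < B_j ≤ R for each j and B₁ + ⋯ + B_M = B, there exist natural numbers 0 = j₀ < j₁ < ⋯ < j_N = M such that, setting J_k = {j_{k−1}+1, …, j_k}, for every k = 1, …, N one has A_k < ∑_{j ∈ J_k} B_j. -/
open Finset

/-- **The amphorae-into-barrels lemma, part (b).**
Given `0 < A < B` and positive reals `A₁, …, A_N` summing to `A`, there is `R > 0` such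
that any finite family of positive reals `B₁, …, B_M`, each `≤ R`, summing to `B`,
can be split into consecutive nonempty blocks `J_k = {j_{k-1}+1, …, j_k}` (with
`0 = j₀ < j₁ < ⋯ < j_N = M`) such that `A_k < ∑_{j ∈ J_k} B_j` for every `k`.
(Here the `B_j` are indexed by `0, …, M-1`, so the `k`-th block is `[j_{k-1}, j_k)`.) -/
theorem stmt_2 (A B : ℝ) (hA : 0 < A) (hAB : A < B)
    (N : ℕ) (As : Fin N → ℝ) (hAs : ∀ k, 0 < As k) (hAsum : ∑ k, As k = A) :
    ∃ R > (0 : ℝ), ∀ (M : ℕ) (Bs : ℕ → ℝ),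
      (∀ j < M, 0 < Bs j) → (∀ j < M, Bs j ≤ R) →
      (∑ j ∈ Finset.range M, Bs j = B) →
      ∃ j : ℕ → ℕ, j 0 = 0 ∧ j N = M ∧ (∀ k < N, j k < j (k + 1)) ∧
        ∀ k : Fin N, As k < ∑ i ∈ Finset.Ico (j k) (j (k + 1)), Bs i := by
  rcases Nat.eq_zero_or_pos N with hN0 | hN1
  · subst hN0; simp at hAsum; linarith
  have hNR : (0:ℝ) < (N:ℝ) := by exact_mod_cast hN1
  set R : ℝ := (B - A) / (2 * N) with hRdef
  have hRpos : 0 < R := div_pos (by linarith) (by positivity)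
  have hNR2 : (N:ℝ) * R = (B - A) / 2 := by
    rw [hRdef]; field_simp
  refine ⟨R, hRpos, ?_⟩
  intro M Bs hBpos hBle hBsum
  set As' : ℕ → ℝ := fun i => if h : i < N then As ⟨i, h⟩ else 0 with hAs'def
  have hAs'pos : ∀ i, i < N → 0 < As' i := fun i hi => by simp [hAs'def, hi, hAs]
  have hAs'nonneg : ∀ i, 0 ≤ As' i := fun i => by
    by_cases hi : i < N
    · exact (hAs'pos i hi).le
    · simp [hAs'def, hi]
  have hAsumN : ∑ i ∈ Finset.range N, As' i = A := by
    rw [← hAsum, Finset.sum_range]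
    exact Finset.sum_congr rfl (fun i _ => by simp [hAs'def, i.isLt])
  have hpartial : ∀ k, k ≤ N → ∑ i ∈ Finset.range k, As' i ≤ A := by
    intro k hk
    rw [← hAsumN]
    exact Finset.sum_le_sum_of_subset_of_nonneg (Finset.range_subset_range.2 hk)
      (fun i _ _ => hAs'nonneg i)
  set S : ℕ → ℝ := fun n => ∑ i ∈ Finset.range n, Bs i with hSdef
  have hSM : S M = B := hBsum
  have hSmono : ∀ a b, a ≤ b → b ≤ M → S a ≤ S b := by
    intro a b hab hbM
    apply Finset.sum_le_sum_of_subset_of_nonneg (Finset.range_subset_range.2 hab)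
    intro i hi _
    exact (hBpos i (lt_of_lt_of_le (Finset.mem_range.mp hi) hbM)).le
  set t : ℕ → ℝ := fun k => (∑ i ∈ Finset.range k, As' i) + k * R with htdef
  have ht_succ : ∀ k, t (k + 1) = t k + As' k + R := by
    intro k
    simp only [htdef, Finset.sum_range_succ]
    push_cast; ring
  have htbound : ∀ k, k < N → t k + R < B := by
    intro k hk
    have h1 : ∑ i ∈ Finset.range k, As' i + As' k ≤ A := by
      have := hpartial (k + 1) hk
      rwa [Finset.sum_range_succ] at this
    have h2 : ((k:ℝ) + 1) * R ≤ (N:ℝ) * R := by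
      apply mul_le_mul_of_nonneg_right _ hRpos.le
      have : (k + 1 : ℕ) ≤ N := hk
      exact_mod_cast this
    have h3 := hAs'pos k hk
    simp only [htdef]
    nlinarith
  have hmem : ∀ k, k < N → M ∈ {n | t k < S n} := by
    intro k hk
    have := htbound k hk
    simp only [Set.mem_setOf_eq, hSM]
    linarith
  set j : ℕ → ℕ := fun k => if k = 0 then 0 else if k < N then sInf {n | t k < S n} else M
    with hjdef
  have hj0 : j 0 = 0 := by simp [hjdef]
  have hjN : j N = M := by simp [hjdef, hN1.ne']
  have hjleM : ∀ k, k ≤ N → j k ≤ M := by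
    intro k hk
    simp only [hjdef]
    split_ifs with h1 h2
    · omega
    · exact Nat.sInf_le (hmem k h2)
    · exact le_refl M
  have hspec : ∀ k, 0 < k → k < N → t k < S (j k) := by
    intro k hk0 hkN
    have hj : j k = sInf {n | t k < S n} := by simp [hjdef, hk0.ne', hkN]
    rw [hj]
    exact Nat.sInf_mem ⟨M, hmem k hkN⟩
  have hS0 : S 0 = 0 := by simp [hSdef]
  have ht0 : t 0 = 0 := by simp [htdef]
  have htnonneg : ∀ k, 0 ≤ t k := by
    intro k
    simp only [htdef]
    have : 0 ≤ ∑ i ∈ Finset.range k, As' i := Finset.sum_nonneg fun i _ => hAs'nonneg i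
    positivity
  have hupper : ∀ k, k < N → S (j k) ≤ t k + R := by
    intro k hkN
    rcases Nat.eq_zero_or_pos k with hk0 | hk0
    · subst hk0; rw [hj0, hS0, ht0]; linarith
    · rcases Nat.eq_zero_or_pos (j k) with hjk0 | hjk0
      · rw [hjk0, hS0]; linarith [htnonneg k]
      · have hj : j k = sInf {n | t k < S n} := by simp [hjdef, hk0.ne', hkN]
        set m := j k - 1 with hm
        have hmlt : m < j k := by omega
        have hnot : m ∉ {n | t k < S n} := by
          rw [hj] at hmlt
          exact Nat.notMem_of_lt_sInf hmlt
        have hSm : S m ≤ t k := by simpa [Set.mem_setOf_eq, not_lt] using hnot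
        have hmM : m < M := lt_of_lt_of_le hmlt (hjleM k hkN.le)
        have hstep : S (j k) = S m + Bs m := by
          have : j k = m + 1 := by omega
          rw [this]
          simp [hSdef, Finset.sum_range_succ]
        rw [hstep]
        have := hBle m hmM
        linarith
  have hlt : ∀ k, k < N → j k < j (k + 1) := by
    intro k hk
    have hup := hupper k hk
    by_cases hk1 : k + 1 < N
    · have hsp := hspec (k + 1) (Nat.succ_pos k) hk1
      have h1 : t k + R < t (k + 1) := by
        rw [ht_succ]
        have := hAs'pos k hk
        linarith
      by_contra h
      push_neg at h
      have := hSmono (k + 1 |> j) (j k) h (hjleM k hk.le)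
      linarith
    · have hkN : k + 1 = N := by omega
      have hjk1 : j (k + 1) = M := by rw [hkN, hjN]
      rw [hjk1]
      have hSlt : S (j k) < S M := by rw [hSM]; linarith [htbound k hk]
      have hle' : j k ≤ M := hjleM k hk.le
      rcases lt_or_eq_of_le hle' with h | h
      · exact h
      · rw [h] at hSlt; exact absurd hSlt (lt_irrefl _)
  refine ⟨j, hj0, hjN, hlt, ?_⟩
  intro k
  have hk := k.isLt
  have hAsk : As' (k : ℕ) = As k := by simp [hAs'def, hk]
  have hsub : ∑ i ∈ Finset.Ico (j k) (j ((k : ℕ) + 1)), Bs i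
      = S (j ((k : ℕ) + 1)) - S (j (k : ℕ)) :=
    Finset.sum_Ico_eq_sub _ (hlt (k : ℕ) hk).le
  rw [hsub]
  have hup := hupper (k : ℕ) hk
  by_cases hk1 : (k : ℕ) + 1 < N
  · have hsp := hspec ((k : ℕ) + 1) (Nat.succ_pos _) hk1
    rw [ht_succ] at hsp
    rw [← hAsk]
    linarith
  · have hkN : (k : ℕ) + 1 = N := by omega
    have hjk1 : j ((k : ℕ) + 1) = M := by rw [hkN, hjN]
    rw [hjk1, hSM]
    have h1 : ∑ i ∈ Finset.range (k : ℕ), As' i + As' (k : ℕ) ≤ A := by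
      have := hpartial ((k : ℕ) + 1) (le_of_eq hkN)
      rwa [Finset.sum_range_succ] at this
    have h2 : ((k : ℕ) : ℝ) * R + R = (B - A) / 2 := by
      have : (((k : ℕ) : ℝ) + 1) = (N : ℝ) := by exact_mod_cast congrArg (Nat.cast : ℕ → ℝ) hkN
      nlinarith [hNR2]
    have h3 : S (j (k : ℕ)) ≤ t (k : ℕ) + R := hup
    simp only [htdef] at h3
    rw [← hAsk]
    linarith
end

section
/- Let (X,d) be a metric space with a Borel measure μ such that every open ball has finite μ-measure, and suppose μ is continuous, i.e. for every x ∈ X the map r ↦ μ(B(x,r)) from [0,∞) to [0,∞) is continuous (with the convention B(x,0) = ∅). Then the ball map is continuous into the measure algebra: for every x ∈ X, r ≥ 0 and ε > 0 there is δ > 0 such that for all x' ∈ X and r' ≥ 0, if d(x,x') < δ and |r − r'| < δ then μ(B(x,r) △ B(x',r')) < ε. In particular the map (x,r) ↦ μ(B(x,r)) is continuous on X × [0,∞). -/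
open MeasureTheory Metric Set

lemma aux_abs_sub_le_symmDiff {X : Type*} [MeasurableSpace X] (μ : Measure X) (A B : Set X)
    (hA : μ A ≠ ⊤) (hB : μ B ≠ ⊤) :
    |(μ A).toReal - (μ B).toReal| ≤ (μ (symmDiff A B)).toReal := by
  have hsub : ∀ C D : Set X, C ⊆ D ∪ symmDiff C D := by
    intro C D y hy
    by_cases h : y ∈ D
    · exact Or.inl h
    · exact Or.inr (mem_symmDiff.2 (Or.inl ⟨hy, h⟩))
  have hdsub : symmDiff A B ⊆ A ∪ B := by
    intro y hy
    rcases mem_symmDiff.1 hy with ⟨h, _⟩ | ⟨h, _⟩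
    · exact Or.inl h
    · exact Or.inr h
  have hd : μ (symmDiff A B) ≠ ⊤ := by
    refine ((measure_mono hdsub).trans_lt ((measure_union_le _ _).trans_lt ?_)).ne
    rw [ENNReal.add_lt_top]
    exact ⟨hA.lt_top, hB.lt_top⟩
  have key : ∀ C D : Set X, μ D ≠ ⊤ → μ (symmDiff C D) ≠ ⊤ →
      (μ C).toReal - (μ D).toReal ≤ (μ (symmDiff C D)).toReal := by
    intro C D hD hCD
    have h1 : μ C ≤ μ D + μ (symmDiff C D) :=
      (measure_mono (hsub C D)).trans (measure_union_le _ _)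
    have h2 : (μ C).toReal ≤ (μ D).toReal + (μ (symmDiff C D)).toReal := by
      rw [← ENNReal.toReal_add hD hCD]
      exact ENNReal.toReal_mono (by simp [ENNReal.add_ne_top, hD, hCD]) h1
    linarith
  rw [abs_sub_le_iff]
  refine ⟨key A B hB hd, ?_⟩
  rw [symmDiff_comm] at hd ⊢
  exact key B A hA hd

/-- **Continuity of the ball map into the measure algebra.**
If `μ` is a Borel measure on a metric space in which every open ball has finite measure,
and for every `x` the map `r ↦ μ(B(x,r))` is continuous on `[0,∞)`, then the map
`(x,r) ↦ [B(x,r)]` is continuous into the measure algebra; in particular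
`(x,r) ↦ μ(B(x,r))` is continuous on `X × [0,∞)`. -/
theorem stmt_3 {X : Type*} [MetricSpace X] [MeasurableSpace X] [BorelSpace X]
    (μ : Measure X)
    (hfin : ∀ (x : X) (r : ℝ), μ (ball x r) < ⊤)
    (hcont : ∀ x : X, ContinuousOn (fun r : ℝ => (μ (ball x r)).toReal) (Ici 0)) :
    (∀ (x : X) (r : ℝ), 0 ≤ r → ∀ ε > (0 : ℝ), ∃ δ > (0 : ℝ),
      ∀ (x' : X) (r' : ℝ), 0 ≤ r' → dist x x' < δ → |r - r'| < δ →
        (μ (symmDiff (ball x r) (ball x' r'))).toReal < ε) ∧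
    ContinuousOn (fun p : X × ℝ => (μ (ball p.1 p.2)).toReal) (univ ×ˢ Ici 0) := by
  have hfin' : ∀ (x : X) (r : ℝ), μ (ball x r) ≠ ⊤ := fun x r => (hfin x r).ne
  have key : ∀ (x : X) (r : ℝ), 0 ≤ r → ∀ ε > (0 : ℝ), ∃ δ > (0 : ℝ),
      ∀ (x' : X) (r' : ℝ), 0 ≤ r' → dist x x' < δ → |r - r'| < δ →
        (μ (symmDiff (ball x r) (ball x' r'))).toReal < ε := by
    intro x r hr ε hε
    have hc : ContinuousWithinAt (fun s : ℝ => (μ (ball x s)).toReal) (Ici 0) r :=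
      hcont x r hr
    rw [Metric.continuousWithinAt_iff] at hc
    obtain ⟨η, hη, hη2⟩ := hc (ε / 2) (by linarith)
    refine ⟨η / 3, by linarith, ?_⟩
    intro x' r' hr' hdx hdr
    set δ : ℝ := η / 3 with hδdef
    have hδ : 0 < δ := by positivity
    have hrr'1 : r - r' < δ := (abs_sub_lt_iff.1 hdr).1
    have hrr'2 : r' - r < δ := (abs_sub_lt_iff.1 hdr).2
    -- inclusion of the symmetric difference in an annulus
    have hincl : symmDiff (ball x r) (ball x' r') ⊆
        ball x (r + 2 * δ) \ ball x (r - 2 * δ) := by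
      intro y hy
      rcases mem_symmDiff.1 hy with ⟨h1, h2⟩ | ⟨h1, h2⟩
      · rw [mem_ball] at h1
        refine ⟨mem_ball.2 (by linarith), ?_⟩
        intro hcon
        rw [mem_ball] at hcon
        apply h2
        rw [mem_ball]
        have ht : dist y x' ≤ dist y x + dist x x' := dist_triangle y x x'
        linarith
      · rw [mem_ball] at h1
        refine ⟨?_, ?_⟩
        · rw [mem_ball]
          have ht : dist y x ≤ dist y x' + dist x x' := by
            calc dist y x ≤ dist y x' + dist x' x := dist_triangle y x' x
              _ = dist y x' + dist x x' := by rw [dist_comm x' x]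
          linarith
        · intro hcon
          exact h2 (ball_subset_ball (by linarith) hcon)
    set s : ℝ := max (r - 2 * δ) 0 with hsdef
    have hballs : ball x (r - 2 * δ) = ball x s := by
      rcases le_or_gt (r - 2 * δ) 0 with h | h
      · rw [hsdef, max_eq_right h, ball_eq_empty.2 h, Metric.ball_zero]
      · rw [hsdef, max_eq_left h.le]
    have hs0 : (0 : ℝ) ≤ s := le_max_right _ _
    have hsler : s ≤ r := max_le (by linarith) hr
    have hsge : r - 2 * δ ≤ s := le_max_left _ _
    have hdist1 : dist (r + 2 * δ) r < η := by
      rw [Real.dist_eq]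
      rw [abs_of_nonneg (by linarith)]
      linarith
    have hdist2 : dist s r < η := by
      rw [Real.dist_eq, abs_of_nonpos (by linarith)]
      linarith
    have hb1 := hη2 (mem_Ici.2 (by linarith : (0:ℝ) ≤ r + 2 * δ)) hdist1
    have hb2 := hη2 (mem_Ici.2 hs0) hdist2
    rw [Real.dist_eq] at hb1 hb2
    have hab1 := abs_sub_lt_iff.1 hb1
    have hab2 := abs_sub_lt_iff.1 hb2
    have hsubset : ball x (r - 2 * δ) ⊆ ball x (r + 2 * δ) :=
      ball_subset_ball (by linarith)
    have hdiffeq : μ (ball x (r + 2 * δ) \ ball x (r - 2 * δ)) =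
        μ (ball x (r + 2 * δ)) - μ (ball x (r - 2 * δ)) :=
      measure_diff hsubset measurableSet_ball.nullMeasurableSet (hfin' x _)
    have hdiffne : μ (ball x (r + 2 * δ) \ ball x (r - 2 * δ)) ≠ ⊤ :=
      ((measure_mono diff_subset).trans_lt (hfin x _)).ne
    have h1 : (μ (symmDiff (ball x r) (ball x' r'))).toReal ≤
        (μ (ball x (r + 2 * δ) \ ball x (r - 2 * δ))).toReal :=
      ENNReal.toReal_mono hdiffne (measure_mono hincl)
    have h2 : (μ (ball x (r + 2 * δ) \ ball x (r - 2 * δ))).toReal =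
        (μ (ball x (r + 2 * δ))).toReal - (μ (ball x (r - 2 * δ))).toReal := by
      rw [hdiffeq, ENNReal.toReal_sub_of_le (measure_mono hsubset) (hfin' x _)]
    rw [h2, hballs] at h1
    calc (μ (symmDiff (ball x r) (ball x' r'))).toReal
        ≤ (μ (ball x (r + 2 * δ))).toReal - (μ (ball x s)).toReal := h1
      _ < ε := by linarith [hab1.1, hab2.2]
  refine ⟨key, ?_⟩
  rw [Metric.continuousOn_iff]
  intro p hp ε hε
  obtain ⟨δ, hδ, h⟩ := key p.1 p.2 hp.2 ε hε
  refine ⟨δ, hδ, ?_⟩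
  intro q hq hdq
  rw [Prod.dist_eq] at hdq
  have hd1 : dist q.1 p.1 < δ := lt_of_le_of_lt (le_max_left _ _) hdq
  have hd2 : dist q.2 p.2 < δ := lt_of_le_of_lt (le_max_right _ _) hdq
  have hsd := h q.1 q.2 hq.2 (by rwa [dist_comm]) (by rwa [abs_sub_comm, ← Real.dist_eq])
  rw [Real.dist_eq]
  calc |(μ (ball q.1 q.2)).toReal - (μ (ball p.1 p.2)).toReal|
      ≤ (μ (symmDiff (ball q.1 q.2) (ball p.1 p.2))).toReal :=
        aux_abs_sub_le_symmDiff μ _ _ (hfin' _ _) (hfin' _ _)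
    _ = (μ (symmDiff (ball p.1 p.2) (ball q.1 q.2))).toReal := by rw [symmDiff_comm]
    _ < ε := hsd
end

section
/- Let (X,d) be a metric space with a fully supported, locally finite Borel measure μ, let x ∈ X, and let (εₙ) be a strictly decreasing sequence of positive reals converging to 0 such that 0 < μ(B(x,εₙ)) < ∞ for all n. If lim_{n→∞} μ(B(x,ε_{n+1}))/μ(B(x,εₙ)) = 1, then (εₙ) is a strong basis for density at x: for every measurable set A ⊆ X, limsup_{n→∞} μ(A ∩ B(x,εₙ))/μ(B(x,εₙ)) = limsup_{ε→0⁺} μ(A ∩ B(x,ε))/μ(B(x,ε)). -/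
open MeasureTheory Metric Set Filter Topology

/-- **A sequence of radii with consecutive measure-ratios tending to 1 is a strong basis for
density.** Let `μ` be a fully supported, locally finite Borel measure on a metric space `X`,
`x ∈ X`, and `(εₙ)` a strictly decreasing sequence of positive reals tending to `0` with
`0 < μ(B(x,εₙ)) < ∞`. If `μ(B(x,ε_{n+1}))/μ(B(x,εₙ)) → 1`, then for every measurable `A`,
`limsup_n μ(A ∩ B(x,εₙ))/μ(B(x,εₙ))` equals the upper density
`limsup_{ε→0⁺} μ(A ∩ B(x,ε))/μ(B(x,ε))`. -/
theorem stmt_5 {X : Type*} [MetricSpace X] [MeasurableSpace X] [BorelSpace X]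
    (μ : Measure X) [IsLocallyFiniteMeasure μ]
    (hfs : ∀ U : Set X, IsOpen U → U.Nonempty → 0 < μ U)
    (x : X) (ε : ℕ → ℝ) (hεpos : ∀ n, 0 < ε n) (hεanti : StrictAnti ε)
    (hεlim : Tendsto ε atTop (𝓝 0))
    (hballpos : ∀ n, 0 < μ (ball x (ε n))) (hballfin : ∀ n, μ (ball x (ε n)) < ⊤)
    (hratio : Tendsto
      (fun n => (μ (ball x (ε (n + 1)))).toReal / (μ (ball x (ε n))).toReal)
      atTop (𝓝 1)) :
    ∀ A : Set X, MeasurableSet A →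
      limsup (fun n => (μ (A ∩ ball x (ε n))).toReal / (μ (ball x (ε n))).toReal) atTop =
      limsup (fun e : ℝ => (μ (A ∩ ball x e)).toReal / (μ (ball x e)).toReal)
        (𝓝[>] (0 : ℝ)) := by
  intro A hA
  set f : ℝ → ℝ := fun e => (μ (A ∩ ball x e)).toReal / (μ (ball x e)).toReal with hfdef
  have hbpos : ∀ n, 0 < (μ (ball x (ε n))).toReal := fun n =>
    ENNReal.toReal_pos (hballpos n).ne' (hballfin n).ne
  have hbne : ∀ n, (μ (ball x (ε n))).toReal ≠ 0 := fun n => (hbpos n).ne'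
  have hf_nonneg : ∀ e, 0 ≤ f e := fun e =>
    div_nonneg ENNReal.toReal_nonneg ENNReal.toReal_nonneg
  have hf_le_one : ∀ e, f e ≤ 1 := by
    intro e
    by_cases h0 : (μ (ball x e)).toReal = 0
    · simp [hfdef, h0]
    · have hfin : μ (ball x e) ≠ ⊤ := by
        intro htop
        simp [htop] at h0
      have hnum : (μ (A ∩ ball x e)).toReal ≤ (μ (ball x e)).toReal :=
        ENNReal.toReal_mono hfin (measure_mono inter_subset_right)
      exact div_le_one_of_le₀ hnum ENNReal.toReal_nonneg
  -- the sequence limsup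
  have hLHS :
      (fun n => (μ (A ∩ ball x (ε n))).toReal / (μ (ball x (ε n))).toReal) = f ∘ ε := rfl
  rw [hLHS]
  have hboundedseq : IsBoundedUnder (· ≤ ·) atTop (f ∘ ε) :=
    isBoundedUnder_of ⟨1, fun n => hf_le_one (ε n)⟩
  have hboundednhds : IsBoundedUnder (· ≤ ·) (𝓝[>] (0 : ℝ)) f :=
    isBoundedUnder_of ⟨1, fun e => hf_le_one e⟩
  have hcobseq : IsCoboundedUnder (· ≤ ·) atTop (f ∘ ε) :=
    isCoboundedUnder_le_of_le atTop (fun n => hf_nonneg (ε n))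
  have hcobnhds : IsCoboundedUnder (· ≤ ·) (𝓝[>] (0 : ℝ)) f :=
    isCoboundedUnder_le_of_le _ (fun e => hf_nonneg e)
  apply le_antisymm
  · -- ≤ : ε tends to 0 within (0, ∞)
    have htend : Tendsto ε atTop (𝓝[>] (0 : ℝ)) :=
      tendsto_nhdsWithin_of_tendsto_nhds_of_eventually_within _ hεlim
        (Eventually.of_forall fun n => hεpos n)
    rw [limsup_comp]
    exact limsup_le_limsup_of_le htend
      (hcobseq) hboundednhds
  · -- ≥
    have hL0 : (0 : ℝ) ≤ limsup (f ∘ ε) atTop :=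
      le_limsup_of_frequently_le (Frequently.of_forall fun n => hf_nonneg (ε n)) hboundedseq
    refine le_of_forall_gt_imp_ge_of_dense fun c hc => ?_
    obtain ⟨c', hc'1, hc'2⟩ := exists_between hc
    have hc'pos : 0 < c' := lt_of_le_of_lt hL0 hc'1
    have h1 : ∀ᶠ n in atTop, f (ε n) ≤ c' :=
      (eventually_lt_of_limsup_lt hc'1 hboundedseq).mono fun n h => h.le
    -- the inverse ratio tends to 1
    have hrtend : Tendsto
        (fun n => (μ (ball x (ε n))).toReal / (μ (ball x (ε (n + 1)))).toReal)
        atTop (𝓝 1) := by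
      have h := hratio.inv₀ one_ne_zero
      simp only [inv_div, inv_one] at h
      exact h
    have hlt : (1 : ℝ) < c / c' := (one_lt_div hc'pos).mpr hc'2
    have h2 : ∀ᶠ n in atTop,
        (μ (ball x (ε n))).toReal / (μ (ball x (ε (n + 1)))).toReal ≤ c / c' :=
      hrtend.eventually (eventually_le_nhds hlt)
    obtain ⟨N, hN⟩ := eventually_atTop.1 (h1.and h2)
    apply limsup_le_of_le hcobnhds
    have hIoo : Ioo (0 : ℝ) (ε N) ∈ 𝓝[>] (0 : ℝ) :=
      Ioo_mem_nhdsGT_of_mem ⟨le_refl 0, hεpos N⟩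
    filter_upwards [hIoo] with e he
    obtain ⟨he0, heN⟩ := he
    -- find n ≥ N with ε (n+1) < e ≤ ε n
    have hex : ∃ m, ε m < e := (hεlim.eventually (eventually_lt_nhds he0)).exists
    have hNm : N < Nat.find hex := by
      by_contra h
      push_neg at h
      have h1' : ε N ≤ ε (Nat.find hex) := hεanti.antitone h
      have h2' : ε (Nat.find hex) < e := Nat.find_spec hex
      linarith
    obtain ⟨n, hmn, hnN, hm, hen⟩ :
        ∃ n, Nat.find hex = n + 1 ∧ N ≤ n ∧ ε (n + 1) < e ∧ e ≤ ε n := by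
      refine ⟨Nat.find hex - 1, by omega, by omega, ?_, ?_⟩
      · have := Nat.find_spec hex
        rwa [show Nat.find hex - 1 + 1 = Nat.find hex by omega]
      · by_contra h
        push_neg at h
        have hfl : Nat.find hex ≤ Nat.find hex - 1 := Nat.find_le h
        omega
    -- the key estimate
    have hfinn : μ (A ∩ ball x (ε n)) ≠ ⊤ :=
      (lt_of_le_of_lt (measure_mono inter_subset_right) (hballfin n)).ne
    have hfine : μ (ball x e) ≠ ⊤ :=
      (lt_of_le_of_lt (measure_mono (ball_subset_ball hen)) (hballfin n)).ne
    have hnum : (μ (A ∩ ball x e)).toReal ≤ (μ (A ∩ ball x (ε n))).toReal :=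
      ENNReal.toReal_mono hfinn
        (measure_mono (inter_subset_inter_right A (ball_subset_ball hen)))
    have hden : (μ (ball x (ε (n + 1)))).toReal ≤ (μ (ball x e)).toReal :=
      ENNReal.toReal_mono hfine (measure_mono (ball_subset_ball hm.le))
    have hkey : f e ≤ (μ (A ∩ ball x (ε n))).toReal / (μ (ball x (ε (n + 1)))).toReal :=
      div_le_div₀ ENNReal.toReal_nonneg hnum (hbpos (n + 1)) hden
    have hsplit : (μ (A ∩ ball x (ε n))).toReal / (μ (ball x (ε (n + 1)))).toReal =
        f (ε n) * ((μ (ball x (ε n))).toReal / (μ (ball x (ε (n + 1)))).toReal) := by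
      rw [hfdef]
      field_simp
      rw [mul_div_mul_right _ _ (hbne n)]
    calc f e ≤ f (ε n) * ((μ (ball x (ε n))).toReal / (μ (ball x (ε (n + 1)))).toReal) := by
          rw [← hsplit]; exact hkey
      _ ≤ c' * (c / c') :=
          mul_le_mul (hN n hnN).1 (hN n hnN).2
            (div_nonneg ENNReal.toReal_nonneg ENNReal.toReal_nonneg) hc'pos.le
      _ = c := by field_simp
end

section
/- Let (X,d) be a metric space with a fully supported, locally finite Borel measure μ, let x ∈ X, and let (εₙ) be a strictly decreasing sequence of positive reals converging to 0 with 0 < μ(B(x,εₙ)) < ∞ for all n. Suppose (εₙ) is a basis for density at x, i.e. for every measurable A ⊆ X and every r ∈ [0,1], if lim_{n→∞} μ(A ∩ B(x,εₙ))/μ(B(x,εₙ)) = r then the full limit lim_{ε→0⁺} μ(A ∩ B(x,ε))/μ(B(x,ε)) exists and equals r. If moreover the map r ↦ μ(B(x,r)) is continuous on [0,∞), then lim_{n→∞} μ(B(x,ε_{n+1}))/μ(B(x,εₙ)) = 1. -/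
open MeasureTheory Metric Set Filter Topology

/-- **For a continuous measure, a basis for density must have consecutive measure-ratios
tending to 1.** Let `μ` be a fully supported, locally finite Borel measure on a metric
space `X`, `x ∈ X`, and `(εₙ)` a strictly decreasing sequence of positive reals tending
to `0` with `0 < μ(B(x,εₙ)) < ∞`. Assume `(εₙ)` is a basis for density at `x`: for every
measurable `A` and every `r ∈ [0,1]`, if `μ(A ∩ B(x,εₙ))/μ(B(x,εₙ)) → r` then the full
limit `lim_{ε→0⁺} μ(A ∩ B(x,ε))/μ(B(x,ε))` exists and equals `r`. If moreover
`r ↦ μ(B(x,r))` is continuous on `[0,∞)`, then `μ(B(x,ε_{n+1}))/μ(B(x,εₙ)) → 1`. -/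
theorem stmt_6 {X : Type*} [MetricSpace X] [MeasurableSpace X] [BorelSpace X]
    (μ : Measure X) [IsLocallyFiniteMeasure μ]
    (hfs : ∀ U : Set X, IsOpen U → U.Nonempty → 0 < μ U)
    (x : X) (ε : ℕ → ℝ) (hεpos : ∀ n, 0 < ε n) (hεanti : StrictAnti ε)
    (hεlim : Tendsto ε atTop (𝓝 0))
    (hballpos : ∀ n, 0 < μ (ball x (ε n))) (hballfin : ∀ n, μ (ball x (ε n)) < ⊤)
    (hbasis : ∀ A : Set X, MeasurableSet A → ∀ r ∈ Icc (0 : ℝ) 1,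
      Tendsto (fun n => (μ (A ∩ ball x (ε n))).toReal / (μ (ball x (ε n))).toReal)
        atTop (𝓝 r) →
      Tendsto (fun e : ℝ => (μ (A ∩ ball x e)).toReal / (μ (ball x e)).toReal)
        (𝓝[>] (0 : ℝ)) (𝓝 r))
    (hcont : ContinuousOn (fun r : ℝ => μ (ball x r)) (Ici 0)) :
    Tendsto (fun n => (μ (ball x (ε (n + 1)))).toReal / (μ (ball x (ε n))).toReal)
      atTop (𝓝 1) := by
  set m : ℝ → ℝ := fun r => (μ (ball x r)).toReal with hm
  have hεle : ∀ {a b : ℕ}, a ≤ b → ε b ≤ ε a := fun h => hεanti.antitone h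
  have hfin : ∀ n, ∀ r : ℝ, r ≤ ε n → μ (ball x r) ≠ ⊤ := fun n r hr =>
    ((measure_mono (ball_subset_ball hr)).trans_lt (hballfin n)).ne
  have hmle : ∀ {a b : ℝ}, a ≤ b → b ≤ ε 0 → m a ≤ m b := by
    intro a b hab hb
    exact ENNReal.toReal_mono (hfin 0 b hb) (measure_mono (ball_subset_ball hab))
  -- m positive at ε n
  have hmpos : ∀ n, 0 < m (ε n) := fun n =>
    ENNReal.toReal_pos (hballpos n).ne' (hballfin n).ne
  -- continuity of m on each Icc
  have hmc : ∀ n, ContinuousOn m (Icc (ε (n + 1)) (ε n)) := by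
    intro n
    apply ENNReal.continuousOn_toReal.comp (hcont.mono ?_) ?_
    · exact fun r hr => le_trans (hεpos (n + 1)).le hr.1
    · intro r hr
      exact hfin n r hr.2
  -- choose t n by IVT
  have hT : ∀ n, ∃ s ∈ Icc (ε (n + 1)) (ε n),
      m s = (m (ε (n + 1)) + m (ε n)) / 2 := by
    intro n
    have h1 : ε (n + 1) ≤ ε n := (hεanti (Nat.lt_succ_self n)).le
    have hle : m (ε (n + 1)) ≤ m (ε n) := hmle h1 (hεle (Nat.zero_le n))
    have hmem : (m (ε (n + 1)) + m (ε n)) / 2 ∈ Icc (m (ε (n + 1))) (m (ε n)) :=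
      ⟨by linarith, by linarith⟩
    obtain ⟨s, hs, hms⟩ := intermediate_value_Icc h1 (hmc n) hmem
    exact ⟨s, hs, hms⟩
  choose t ht hmt using hT
  have ht1 : ∀ n, ε (n + 1) ≤ t n := fun n => (ht n).1
  have ht2 : ∀ n, t n ≤ ε n := fun n => (ht n).2
  set A : Set X := ⋃ n, ball x (t n) \ ball x (ε (n + 1)) with hA
  have hAmeas : MeasurableSet A :=
    MeasurableSet.iUnion fun n => measurableSet_ball.diff measurableSet_ball
  -- set identities
  have hkey : ∀ n, A ∩ ball x (ε n) =
      (A ∩ ball x (ε (n + 1))) ∪ (ball x (t n) \ ball x (ε (n + 1))) := by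
    intro n
    ext a
    constructor
    · rintro ⟨haA, haB⟩
      by_cases h : a ∈ ball x (ε (n + 1))
      · exact Or.inl ⟨haA, h⟩
      · obtain ⟨_, ⟨k, rfl⟩, hak⟩ := haA
        rcases lt_trichotomy k n with hk | rfl | hk
        · exact absurd (ball_subset_ball (hεle hk) haB) hak.2
        · exact Or.inr hak
        · have : t k ≤ ε (n + 1) := (ht2 k).trans (hεle hk)
          exact absurd (ball_subset_ball this hak.1) h
    · rintro (⟨haA, haB⟩ | hak)
      · exact ⟨haA, ball_subset_ball (hεanti (Nat.lt_succ_self n)).le haB⟩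
      · exact ⟨mem_iUnion.mpr ⟨n, hak⟩, ball_subset_ball (ht2 n) hak.1⟩
  have hkey2 : ∀ n, A ∩ ball x (t n) =
      (A ∩ ball x (ε (n + 1))) ∪ (ball x (t n) \ ball x (ε (n + 1))) := by
    intro n
    ext a
    constructor
    · rintro ⟨haA, haB⟩
      by_cases h : a ∈ ball x (ε (n + 1))
      · exact Or.inl ⟨haA, h⟩
      · exact Or.inr ⟨haB, h⟩
    · rintro (⟨haA, haB⟩ | hak)
      · exact ⟨haA, ball_subset_ball (ht1 n) haB⟩
      · exact ⟨mem_iUnion.mpr ⟨n, hak⟩, hak.1⟩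
  have hdisj : ∀ n, Disjoint (A ∩ ball x (ε (n + 1)))
      (ball x (t n) \ ball x (ε (n + 1))) := by
    intro n
    exact Set.disjoint_left.mpr fun a ⟨_, h⟩ ⟨_, h'⟩ => h' h
  have hdiffmeas : ∀ n, MeasurableSet (ball x (t n) \ ball x (ε (n + 1))) :=
    fun n => measurableSet_ball.diff measurableSet_ball
  have hAfin : ∀ n, μ (A ∩ ball x (ε (n + 1))) ≠ ⊤ := fun n =>
    ((measure_mono inter_subset_right).trans_lt (hballfin (n + 1))).ne
  -- measure of the annulus
  have hdiffval : ∀ n, (μ (ball x (t n) \ ball x (ε (n + 1)))).toReal =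
      (m (ε n) - m (ε (n + 1))) / 2 := by
    intro n
    rw [measure_diff (ball_subset_ball (ht1 n)) measurableSet_ball.nullMeasurableSet
        (hfin (n + 1) _ le_rfl),
      ENNReal.toReal_sub_of_le (measure_mono (ball_subset_ball (ht1 n)))
        (hfin n _ (ht2 n))]
    have := hmt n
    simp only [hm] at this ⊢
    linarith
  have hunion : ∀ n, ∀ S : Set X, S = (A ∩ ball x (ε (n + 1))) ∪
      (ball x (t n) \ ball x (ε (n + 1))) →
      (μ S).toReal = (μ (A ∩ ball x (ε (n + 1)))).toReal + (m (ε n) - m (ε (n + 1))) / 2 := by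
    intro n S hS
    rw [hS, measure_union (hdisj n) (hdiffmeas n),
      ENNReal.toReal_add (hAfin n) ((measure_mono diff_subset).trans_lt
        ((measure_mono (ball_subset_ball (ht2 n))).trans_lt (hballfin n))).ne,
      hdiffval n]
  set aR : ℕ → ℝ := fun n => (μ (A ∩ ball x (ε n))).toReal with haR
  have hrec : ∀ n, aR n = aR (n + 1) + (m (ε n) - m (ε (n + 1))) / 2 := fun n =>
    hunion n _ (hkey n)
  -- m (ε n) → 0
  have hm0 : Tendsto (fun n => m (ε n)) atTop (𝓝 0) := by
    have h0 : ContinuousWithinAt (fun r : ℝ => μ (ball x r)) (Ici 0) 0 :=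
      hcont 0 self_mem_Ici
    have hε' : Tendsto ε atTop (𝓝[Ici 0] 0) :=
      tendsto_nhdsWithin_iff.mpr ⟨hεlim, Eventually.of_forall fun n => (hεpos n).le⟩
    have := h0.tendsto.comp hε'
    have h00 : μ (ball x (0 : ℝ)) = 0 := by simp [Metric.ball_zero]
    rw [h00] at this
    have := (ENNReal.tendsto_toReal (by simp)).comp this
    simpa [hm, Function.comp_def] using this
  -- aR n → 0
  have haR0 : Tendsto aR atTop (𝓝 0) := by
    apply squeeze_zero (fun n => ENNReal.toReal_nonneg) (fun n => ?_) hm0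
    exact ENNReal.toReal_mono (hfin n _ le_rfl) (measure_mono inter_subset_right)
  -- constant sequence
  have hconst : ∀ n, aR n - m (ε n) / 2 = aR 0 - m (ε 0) / 2 := by
    intro n
    induction n with
    | zero => rfl
    | succ k ih =>
      have := hrec k
      linarith
  have hc0 : aR 0 - m (ε 0) / 2 = 0 := by
    have h1 : Tendsto (fun n => aR n - m (ε n) / 2) atTop (𝓝 0) := by
      have := haR0.sub (hm0.div_const 2)
      simpa using this
    have h2 : Tendsto (fun n => aR n - m (ε n) / 2) atTop (𝓝 (aR 0 - m (ε 0) / 2)) := by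
      refine Tendsto.congr (fun n => (hconst n).symm) tendsto_const_nhds
    exact (tendsto_nhds_unique h2 h1).symm ▸ rfl
  have haRval : ∀ n, aR n = m (ε n) / 2 := fun n => by
    have := hconst n; linarith
  -- density along ε n is 1/2
  have hhalf : Tendsto (fun n => (μ (A ∩ ball x (ε n))).toReal /
      (μ (ball x (ε n))).toReal) atTop (𝓝 (1 / 2 : ℝ)) := by
    have : ∀ n, (μ (A ∩ ball x (ε n))).toReal / (μ (ball x (ε n))).toReal
        = 1 / 2 := by
      intro n
      rw [show (μ (A ∩ ball x (ε n))).toReal = aR n from rfl, haRval n,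
        show (μ (ball x (ε n))).toReal = m (ε n) from rfl, div_right_comm,
        div_self (hmpos n).ne']
    simpa [this] using (tendsto_const_nhds : Tendsto (fun _ : ℕ => (1:ℝ)/2) atTop _)
  have hfull := hbasis A hAmeas (1 / 2) ⟨by norm_num, by norm_num⟩ hhalf
  -- compose with t
  have htlim : Tendsto t atTop (𝓝[>] 0) := by
    refine tendsto_nhdsWithin_iff.mpr ⟨?_, Eventually.of_forall fun n =>
      lt_of_lt_of_le (hεpos (n + 1)) (ht1 n)⟩
    have h1 : Tendsto (fun n => ε (n + 1)) atTop (𝓝 0) :=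
      hεlim.comp (tendsto_add_atTop_nat 1)
    exact tendsto_of_tendsto_of_tendsto_of_le_of_le h1 hεlim ht1 ht2
  have hL : Tendsto (fun n => (μ (A ∩ ball x (t n))).toReal / (μ (ball x (t n))).toReal)
      atTop (𝓝 (1 / 2 : ℝ)) := hfull.comp htlim
  have hAt : ∀ n, (μ (A ∩ ball x (t n))).toReal = m (ε n) / 2 := by
    intro n
    have := hunion n _ (hkey2 n)
    rw [this, show (μ (A ∩ ball x (ε (n+1)))).toReal = aR (n+1) from rfl, haRval (n+1)]
    ring
  have hL' : Tendsto (fun n => (m (ε n) / 2) / m (t n)) atTop (𝓝 (1 / 2 : ℝ)) := by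
    refine hL.congr fun n => ?_
    rw [hAt n]
  have hmtpos : ∀ n, 0 < m (t n) := by
    intro n
    rw [hmt n]
    have := hmpos n
    have h2 : 0 ≤ m (ε (n + 1)) := ENNReal.toReal_nonneg
    linarith
  have hinv : Tendsto (fun n => ((m (ε n) / 2) / m (t n))⁻¹) atTop (𝓝 ((1/2 : ℝ)⁻¹)) :=
    hL'.inv₀ (by norm_num)
  have hinv2 : Tendsto (fun n => m (ε (n + 1)) / m (ε n) + 1) atTop (𝓝 2) := by
    have : ∀ n, ((m (ε n) / 2) / m (t n))⁻¹ = m (ε (n + 1)) / m (ε n) + 1 := by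
      intro n
      have h1 := (hmpos n).ne'
      have h2 := (hmtpos n).ne'
      rw [hmt n] at h2 ⊢
      field_simp
    rw [show ((1:ℝ)/2)⁻¹ = 2 by norm_num] at hinv
    exact hinv.congr this
  have hfinal := hinv2.sub_const 1
  rw [show (2:ℝ) - 1 = 1 by norm_num] at hfinal
  exact hfinal.congr fun n => by ring
end

section
/- Let (X,d) be a separable metric space and let μ be a locally finite, tight Borel measure on X. Let A ⊆ X be measurable with μ(A ∖ Φ(A)) = 0. Then the topological closure of Φ(A) equals Cl_μ(A), the μ-closure of A. -/
open MeasureTheory Metric Set Filter Topology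
open scoped ENNReal

/-- The density of a set `A` at a point `x`: the limit, as `ε → 0⁺`, of
`μ(A ∩ B(x,ε))/μ(B(x,ε))`. -/
def HasDensity {X : Type*} [MetricSpace X] [MeasurableSpace X]
    (μ : Measure X) (A : Set X) (x : X) (v : ℝ) : Prop :=
  Tendsto (fun e : ℝ => (μ (A ∩ ball x e)).toReal / (μ (ball x e)).toReal)
    (𝓝[>] (0 : ℝ)) (𝓝 v)

/-- `Φ(A)` is the set of points where `A` has density `1`. -/
def PhiSet {X : Type*} [MetricSpace X] [MeasurableSpace X]
    (μ : Measure X) (A : Set X) : Set X :=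
  {x | HasDensity μ A x 1}

/-- The `μ`-closure of `A`: the complement of the union of all open sets meeting `A` in a
null set. -/
def muClosure {X : Type*} [MetricSpace X] [MeasurableSpace X]
    (μ : Measure X) (A : Set X) : Set X :=
  (⋃₀ {U : Set X | IsOpen U ∧ μ (A ∩ U) = 0})ᶜ

/-- **`Cl Φ(A) = Cl_μ(A)`.** Let `μ` be a locally finite, tight Borel measure on a separable
metric space and let `A` be measurable with `μ(A ∖ Φ(A)) = 0`. Then the topological closure
of `Φ(A)` equals the `μ`-closure of `A`. -/
theorem stmt_8 {X : Type*} [MetricSpace X] [TopologicalSpace.SeparableSpace X]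
    [MeasurableSpace X] [BorelSpace X]
    (μ : Measure X) [IsLocallyFiniteMeasure μ]
    (htight : ∀ E : Set X, MeasurableSet E → ∀ r : ℝ≥0∞, r < μ E →
      ∃ K : Set X, IsCompact K ∧ K ⊆ E ∧ r < μ K)
    (A : Set X) (hA : MeasurableSet A)
    (hAPhi : μ (A \ PhiSet μ A) = 0) :
    closure (PhiSet μ A) = muClosure μ A := by
  apply Subset.antisymm
  · -- closure Φ(A) ⊆ muClosure
    apply closure_minimal _ (isOpen_sUnion (fun U hU => hU.1)).isClosed_compl
    intro x hx hxU
    obtain ⟨U, ⟨hUo, hU0⟩, hxmem⟩ := hxU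
    obtain ⟨δ, hδ, hball⟩ := Metric.isOpen_iff.1 hUo x hxmem
    have hev : ∀ᶠ e in 𝓝[>] (0 : ℝ),
        (μ (A ∩ ball x e)).toReal / (μ (ball x e)).toReal = 0 := by
      filter_upwards [Ioo_mem_nhdsGT_of_mem (by constructor <;> simp [hδ] : (0:ℝ) ∈ Ico 0 δ)]
        with e he
      have h1 : μ (A ∩ ball x e) = 0 :=
        measure_mono_null (inter_subset_inter_right _
          ((ball_subset_ball he.2.le).trans hball)) hU0
      simp [h1]
    have h0 : Tendsto (fun e : ℝ => (μ (A ∩ ball x e)).toReal / (μ (ball x e)).toReal)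
        (𝓝[>] (0 : ℝ)) (𝓝 0) := Tendsto.congr' (hev.mono fun e he => he.symm) tendsto_const_nhds
    have := tendsto_nhds_unique hx h0
    norm_num at this
  · -- muClosure ⊆ closure Φ(A)
    intro x hx
    by_contra hxc
    obtain ⟨r, hr, hball⟩ := Metric.isOpen_iff.1 isClosed_closure.isOpen_compl x hxc
    refine hx ⟨ball x r, ⟨isOpen_ball, ?_⟩, mem_ball_self hr⟩
    apply measure_mono_null _ hAPhi
    intro y ⟨hyA, hyB⟩
    exact ⟨hyA, fun hyP => hball hyB (subset_closure hyP)⟩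
end

section
/- Let (X,d) be a separable metric space and let μ be a locally finite, tight Borel measure on X with μ({x}) = 0 for every x ∈ X. If A ⊆ X is measurable with 0 < μ(A) < ∞, then for every ε > 0 there is a compact set K ⊆ A with empty interior such that μ(A) − ε < μ(K). -/
open MeasureTheory Set
open scoped ENNReal

/-- **Large compact subsets with empty interior.** Let `μ` be a locally finite, tight,
nonsingular Borel measure on a separable metric space `X`. If `A` is measurable with
`0 < μ(A) < ∞`, then for every `ε > 0` there is a compact `K ⊆ A` with empty interior
such that `μ(A) − ε < μ(K)`. -/
theorem stmt_9 {X : Type*} [MetricSpace X] [TopologicalSpace.SeparableSpace X]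
    [MeasurableSpace X] [BorelSpace X]
    (μ : Measure X) [IsLocallyFiniteMeasure μ]
    (htight : ∀ E : Set X, MeasurableSet E → ∀ r : ℝ≥0∞, r < μ E →
      ∃ K : Set X, IsCompact K ∧ K ⊆ E ∧ r < μ K)
    (hns : ∀ x : X, μ {x} = 0)
    (A : Set X) (hA : MeasurableSet A) (hApos : 0 < μ A) (hAfin : μ A < ⊤) :
    ∀ ε : ℝ≥0∞, 0 < ε →
      ∃ K : Set X, IsCompact K ∧ K ⊆ A ∧ interior K = ∅ ∧ μ A - ε < μ K := by
  intro ε hε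
  have : SecondCountableTopology X :=
    UniformSpace.secondCountable_of_separable X
  have hXne : Nonempty X := by
    rcases nonempty_of_measure_ne_zero hApos.ne' with ⟨x, _⟩
    exact ⟨x⟩
  obtain ⟨D, hDcount, hDdense⟩ := TopologicalSpace.exists_countable_dense X
  have hDne : D.Nonempty := hDdense.nonempty
  obtain ⟨f, hf⟩ := hDcount.exists_eq_range hDne
  -- choose δ : small positive finite quantity
  set δ : ℝ≥0∞ := min ε (μ A) / 2 with hδdef
  have hmne : min ε (μ A) ≠ 0 := (lt_min hε hApos).ne'
  have hmtop : min ε (μ A) ≠ ⊤ := ne_top_of_le_ne_top hAfin.ne (min_le_right _ _)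
  have hhalf : δ < min ε (μ A) := ENNReal.half_lt_self hmne hmtop
  have hδpos : 0 < δ := ENNReal.div_pos hmne (by norm_num)
  have hδlt_ε : δ < ε := lt_of_lt_of_le hhalf (min_le_left _ _)
  have hδlt_A : δ < μ A := lt_of_lt_of_le hhalf (min_le_right _ _)
  -- small sum
  obtain ⟨δs, hδspos, hδssum⟩ := ENNReal.exists_pos_sum_of_countable hδpos.ne' ℕ
  -- open sets around dense points
  have hV : ∀ n : ℕ, ∃ V : Set X, f n ∈ V ∧ IsOpen V ∧ μ V < δs n := by
    intro n
    have h0 : μ {f n} < δs n := by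
      rw [hns (f n)]; exact_mod_cast (hδspos n)
    obtain ⟨V, hVsub, hVopen, hVlt⟩ := Set.exists_isOpen_lt_of_lt _ _ h0
    exact ⟨V, hVsub (mem_singleton _), hVopen, hVlt⟩
  choose V hVmem hVopen hVlt using hV
  set U : Set X := ⋃ n, V n with hUdef
  have hUopen : IsOpen U := isOpen_iUnion hVopen
  have hUdense : Dense U := by
    refine hDdense.mono ?_
    rw [hf]
    rintro x ⟨n, rfl⟩
    exact mem_iUnion.2 ⟨n, hVmem n⟩
  have hμU : μ U < δ :=
    lt_of_le_of_lt (measure_iUnion_le V) (lt_of_le_of_lt (ENNReal.tsum_le_tsum fun n => (hVlt n).le) hδssum)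
  -- the remainder has large measure
  have hrem : μ A - ε < μ (A \ U) := by
    have h1 : μ A - δ ≤ μ (A \ U) :=
      le_trans (tsub_le_tsub_left hμU.le _) (le_measure_diff)
    refine lt_of_lt_of_le ?_ h1
    rcases le_or_gt (μ A) ε with h | h
    · rw [tsub_eq_zero_of_le h]
      exact tsub_pos_of_lt hδlt_A
    · exact ((ENNReal.cancel_of_ne hAfin.ne).tsub_lt_tsub_iff_left_of_le
        (ENNReal.cancel_of_ne (h.trans hAfin).ne) h.le).2 hδlt_ε
  obtain ⟨K, hKcomp, hKsub, hKlt⟩ := htight (A \ U) (hA.diff hUopen.measurableSet) _ hrem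
  refine ⟨K, hKcomp, hKsub.trans diff_subset, ?_, hKlt⟩
  have : interior K ⊆ interior Uᶜ :=
    interior_mono (hKsub.trans (diff_subset_compl _ _))
  rw [interior_compl, hUdense.closure_eq, compl_univ] at this
  exact eq_empty_of_subset_empty this
end

section
/- Let (X,d) be a separable metric space and let μ be a Borel measure on X that is locally finite, tight, fully supported (μ(U) > 0 for every nonempty open U), and satisfies μ({x}) = 0 for every x ∈ X. Then there exists a σ-compact set F ⊆ X (a countable union of compact sets) that is simultaneously thick and co-thick: for every nonempty open U ⊆ X one has μ(F ∩ U) > 0 and μ(U ∖ F) > 0. -/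
open MeasureTheory Set

section Aux

variable {X : Type*} [MetricSpace X]
    [MeasurableSpace X] [BorelSpace X]
    (μ : Measure X) [IsLocallyFiniteMeasure μ]

/-- Around every point there are open sets of arbitrarily small positive measure bound. -/
lemma aux_smallNhd (hns : ∀ x : X, μ {x} = 0) (x : X) {ε : ENNReal} (hε : 0 < ε) :
    ∃ V : Set X, IsOpen V ∧ x ∈ V ∧ μ V < ε := by
  obtain ⟨s, hs, hsfin⟩ := μ.finiteAt_nhds x
  obtain ⟨W, hWs, hWo, hxW⟩ := mem_nhds_iff.1 hs
  set V : ℕ → Set X := fun k => W ∩ Metric.ball x ((k + 1 : ℝ))⁻¹ with hV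
  have hVo : ∀ k, IsOpen (V k) := fun k => hWo.inter Metric.isOpen_ball
  have hanti : Antitone V := by
    intro k l hkl
    refine inter_subset_inter_right _ (Metric.ball_subset_ball ?_)
    have h1 : (0:ℝ) < k + 1 := by positivity
    have h2 : (k:ℝ) + 1 ≤ (l:ℝ) + 1 := by exact_mod_cast Nat.succ_le_succ hkl
    gcongr
  have hiInter : ⋂ k, V k ⊆ {x} := by
    intro y hy
    simp only [mem_iInter, hV, mem_inter_iff, Metric.mem_ball] at hy
    have : dist y x = 0 := by
      by_contra h
      have hd : 0 < dist y x := lt_of_le_of_ne dist_nonneg (Ne.symm h)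
      obtain ⟨k, hk⟩ := exists_nat_gt (dist y x)⁻¹
      have h2 : (k + 1 : ℝ)⁻¹ < dist y x := by
        rw [inv_lt_comm₀ (by positivity) hd]
        linarith
      exact absurd ((hy k).2) (not_lt.2 h2.le)
    simp [dist_eq_zero.1 this]
  have htend : Filter.Tendsto (fun k => μ (V k)) Filter.atTop (nhds (μ (⋂ k, V k))) :=
    tendsto_measure_iInter_atTop (fun k => ((hVo k).measurableSet).nullMeasurableSet) hanti
      ⟨0, lt_of_le_of_lt (measure_mono (by exact inter_subset_left.trans hWs)) hsfin |>.ne⟩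
  have h0 : μ (⋂ k, V k) = 0 :=
    le_antisymm (le_trans (measure_mono hiInter) (le_of_eq (hns x))) zero_le
  rw [h0] at htend
  obtain ⟨k, hk⟩ := (htend.eventually_lt_const hε).exists
  exact ⟨V k, hVo k, ⟨hxW, by simp [hV]; positivity⟩, hk⟩

/-- In every nonempty open set there is a compact nowhere dense set of small positive
measure. -/
lemma aux_lemB
    (htight : ∀ E : Set X, MeasurableSet E → ∀ r : ENNReal, r < μ E →
      ∃ K : Set X, IsCompact K ∧ K ⊆ E ∧ r < μ K)
    (hfs : ∀ U : Set X, IsOpen U → U.Nonempty → 0 < μ U)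
    (hns : ∀ x : X, μ {x} = 0) [TopologicalSpace.SeparableSpace X]
    (W : Set X) (hWo : IsOpen W) (hWne : W.Nonempty) {ε : ENNReal} (hε : 0 < ε) :
    ∃ K : Set X, IsCompact K ∧ interior K = ∅ ∧ K ⊆ W ∧ 0 < μ K ∧ μ K < ε := by
  obtain ⟨x, hx⟩ := hWne
  haveI : Nonempty X := ⟨x⟩
  obtain ⟨V, hVo, hxV, hVsmall⟩ := aux_smallNhd μ hns x (lt_min hε zero_lt_one)
  set W' := W ∩ V with hW'
  have hW'o : IsOpen W' := hWo.inter hVo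
  have hW'pos : 0 < μ W' := hfs _ hW'o ⟨x, hx, hxV⟩
  obtain ⟨K₀, hK₀c, hK₀sub, hK₀pos⟩ := htight W' hW'o.measurableSet 0 hW'pos
  have hK₀small : μ K₀ < min ε 1 :=
    lt_of_le_of_lt (measure_mono (hK₀sub.trans inter_subset_right)) hVsmall
  have hK₀fin : μ K₀ ≠ ⊤ := (lt_of_lt_of_le hK₀small (min_le_right _ _)).trans_le le_top |>.ne
  obtain ⟨d, hd⟩ := TopologicalSpace.exists_dense_seq X
  -- choose small balls around the dense sequence
  have hball : ∀ i : ℕ, ∃ B : Set X, IsOpen B ∧ d i ∈ B ∧ μ B < μ K₀ * 2⁻¹ ^ (i + 2) := by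
    intro i
    refine aux_smallNhd μ hns (d i) ?_
    exact ENNReal.mul_pos hK₀pos.ne' (by simp)
  choose B hBo hBd hBsmall using hball
  set K : Set X := K₀ \ ⋃ i, B i with hK
  have hKclosed : IsClosed K := hK₀c.isClosed.sdiff (isOpen_iUnion hBo)
  have hKc : IsCompact K := hK₀c.of_isClosed_subset hKclosed diff_subset
  have hKint : interior K = ∅ := by
    by_contra h
    obtain ⟨y, hy⟩ := nonempty_iff_ne_empty.2 h
    obtain ⟨i, hi⟩ := hd.exists_mem_open isOpen_interior ⟨y, hy⟩
    have : d i ∈ K := interior_subset hi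
    exact this.2 (mem_iUnion.2 ⟨i, hBd i⟩)
  have hsum : μ (⋃ i, B i) ≤ μ K₀ * 2⁻¹ := by
    calc μ (⋃ i, B i) ≤ ∑' i, μ (B i) := measure_iUnion_le _
      _ ≤ ∑' i : ℕ, μ K₀ * 2⁻¹ ^ (i + 2) := ENNReal.tsum_le_tsum fun i => (hBsmall i).le
      _ = μ K₀ * 2⁻¹ ^ 2 * ∑' i : ℕ, 2⁻¹ ^ i := by
          rw [← ENNReal.tsum_mul_left]
          congr 1; ext i; rw [pow_add]; ring
      _ = μ K₀ * 2⁻¹ := by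
          rw [ENNReal.tsum_geometric, ENNReal.one_sub_inv_two]
          rw [mul_assoc]
          congr 1
          rw [show ((2:ENNReal)⁻¹)⁻¹ = 2 by simp]
          rw [pow_two]
          rw [mul_assoc, ENNReal.inv_mul_cancel (by norm_num) (by norm_num), mul_one]
  have hhalf : μ K₀ * 2⁻¹ < μ K₀ := by
    have := ENNReal.half_lt_self hK₀pos.ne' hK₀fin
    rwa [ENNReal.div_eq_inv_mul, mul_comm] at this
  have hKpos : 0 < μ K := by
    have h1 : 0 < μ K₀ - μ (⋃ i, B i) :=
      tsub_pos_iff_lt.2 (lt_of_le_of_lt hsum hhalf)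
    exact lt_of_lt_of_le h1 (le_measure_diff)
  refine ⟨K, hKc, hKint, ?_, hKpos, ?_⟩
  · exact (diff_subset.trans hK₀sub).trans inter_subset_left
  · exact lt_of_le_of_lt (measure_mono diff_subset)
      (lt_of_lt_of_le hK₀small (min_le_left _ _))

/-- The threshold used in the recursive construction. -/
noncomputable def auxEps (μ : Measure X) (Useq : ℕ → Set X) (n : ℕ) (C : Set X) : ENNReal :=
  2⁻¹ ^ n * (Finset.range (n + 1)).inf fun j => min 1 (μ (Useq j \ C))

open Classical in
/-- The compact set chosen at stage `n` given the accumulated set `C`. -/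
noncomputable def auxNext (μ : Measure X) (Useq : ℕ → Set X) (n : ℕ) (C : Set X) : Set X :=
  if h : ∃ K : Set X, IsCompact K ∧ interior K = ∅ ∧ K ⊆ Useq n \ C ∧ 0 < μ K ∧
      μ K < auxEps μ Useq n C
  then h.choose else ∅

/-- The accumulated compact sets. -/
noncomputable def auxF (μ : Measure X) (Useq : ℕ → Set X) : ℕ → Set X
  | 0 => ∅
  | n + 1 => auxF μ Useq n ∪ auxNext μ Useq n (auxF μ Useq n)

lemma aux_int_union {s t : Set X} (hs : IsClosed s) (h1 : interior s = ∅)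
    (h2 : interior t = ∅) : interior (s ∪ t) = ∅ := by
  have hsub : interior (s ∪ t) \ s ⊆ interior t :=
    interior_maximal (fun y hy => (interior_subset hy.1).resolve_left hy.2)
      (isOpen_interior.sdiff hs)
  rw [h2] at hsub
  have : interior (s ∪ t) ⊆ s := fun y hy => by
    by_contra h; exact hsub ⟨hy, h⟩
  have := interior_maximal this isOpen_interior
  rw [h1] at this
  exact eq_empty_iff_forall_notMem.2 fun y hy => this hy


lemma aux_geom_sum : ∑' m : ℕ, (2⁻¹ : ENNReal) ^ (m + 2) = 2⁻¹ := by
  calc ∑' m : ℕ, (2⁻¹ : ENNReal) ^ (m + 2) = 2⁻¹ ^ 2 * ∑' m : ℕ, (2⁻¹:ENNReal) ^ m := by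
        rw [← ENNReal.tsum_mul_left]; congr 1; ext m; rw [pow_add]; ring
    _ = 2⁻¹ := by
        rw [ENNReal.tsum_geometric, ENNReal.one_sub_inv_two,
          show ((2:ENNReal)⁻¹)⁻¹ = 2 by simp, pow_two, mul_assoc,
          ENNReal.inv_mul_cancel (by norm_num) (by norm_num), mul_one]

lemma aux_diff_good {C U : Set X} (hC : IsClosed C) (hCint : interior C = ∅)
    (hUo : IsOpen U) (hUne : U.Nonempty) : IsOpen (U \ C) ∧ (U \ C).Nonempty := by
  refine ⟨hUo.sdiff hC, ?_⟩
  by_contra h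
  rw [not_nonempty_iff_eq_empty, diff_eq_empty] at h
  have h2 := interior_maximal h hUo
  rw [hCint] at h2
  exact hUne.ne_empty (eq_empty_iff_forall_notMem.2 fun y hy => h2 hy)

lemma auxEps_pos (hfs : ∀ U : Set X, IsOpen U → U.Nonempty → 0 < μ U)
    {Useq : ℕ → Set X} (hU : ∀ n, IsOpen (Useq n) ∧ (Useq n).Nonempty)
    {C : Set X} (hC : IsClosed C) (hCint : interior C = ∅) (n : ℕ) :
    0 < auxEps μ Useq n C := by
  apply ENNReal.mul_pos
  · exact pow_ne_zero _ (by norm_num)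
  · intro h
    obtain ⟨j, hj, hj0⟩ := Finset.inf_eq_bot_iff.1 h
    obtain ⟨ho, hne⟩ := aux_diff_good hC hCint (hU j).1 (hU j).2
    exact (lt_min one_pos (hfs _ ho hne)).ne' hj0

lemma auxNext_spec [TopologicalSpace.SeparableSpace X]
    (htight : ∀ E : Set X, MeasurableSet E → ∀ r : ENNReal, r < μ E →
      ∃ K : Set X, IsCompact K ∧ K ⊆ E ∧ r < μ K)
    (hfs : ∀ U : Set X, IsOpen U → U.Nonempty → 0 < μ U)
    (hns : ∀ x : X, μ {x} = 0)
    {Useq : ℕ → Set X} (hU : ∀ n, IsOpen (Useq n) ∧ (Useq n).Nonempty)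
    {C : Set X} (hC : IsClosed C) (hCint : interior C = ∅) (n : ℕ) :
    IsCompact (auxNext μ Useq n C) ∧ interior (auxNext μ Useq n C) = ∅ ∧
      auxNext μ Useq n C ⊆ Useq n \ C ∧ 0 < μ (auxNext μ Useq n C) ∧
      μ (auxNext μ Useq n C) < auxEps μ Useq n C := by
  have hex : ∃ K : Set X, IsCompact K ∧ interior K = ∅ ∧ K ⊆ Useq n \ C ∧ 0 < μ K ∧
      μ K < auxEps μ Useq n C := by
    obtain ⟨ho, hne⟩ := aux_diff_good hC hCint (hU n).1 (hU n).2
    exact aux_lemB μ htight hfs hns _ ho hne (auxEps_pos μ hfs hU hC hCint n)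
  rw [auxNext, dif_pos hex]
  exact hex.choose_spec

lemma auxF_mono {Useq : ℕ → Set X} : Monotone (auxF μ Useq) :=
  monotone_nat_of_le_succ fun n => by
    simp only [auxF]; exact subset_union_left

lemma auxF_spec [TopologicalSpace.SeparableSpace X]
    (htight : ∀ E : Set X, MeasurableSet E → ∀ r : ENNReal, r < μ E →
      ∃ K : Set X, IsCompact K ∧ K ⊆ E ∧ r < μ K)
    (hfs : ∀ U : Set X, IsOpen U → U.Nonempty → 0 < μ U)
    (hns : ∀ x : X, μ {x} = 0)
    {Useq : ℕ → Set X} (hU : ∀ n, IsOpen (Useq n) ∧ (Useq n).Nonempty) :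
    ∀ n, IsCompact (auxF μ Useq n) ∧ interior (auxF μ Useq n) = ∅ := by
  intro n
  induction n with
  | zero => exact ⟨by simp only [auxF]; exact isCompact_empty, by simp only [auxF, interior_empty]⟩
  | succ n ih =>
    have hs := auxNext_spec μ htight hfs hns hU ih.1.isClosed ih.2 n
    exact ⟨by simp only [auxF]; exact ih.1.union hs.1,
      by simp only [auxF]; exact aux_int_union ih.1.isClosed ih.2 hs.2.1⟩

end Aux

/-- **Existence of a σ-compact set that is thick and co-thick.** Let `μ` be a locally
finite, tight, fully supported, nonsingular Borel measure on a separable metric space `X`.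
Then there is a σ-compact `F ⊆ X` such that for every nonempty open `U` one has
`μ(F ∩ U) > 0` and `μ(U ∖ F) > 0`. -/
theorem stmt_10 {X : Type*} [MetricSpace X] [TopologicalSpace.SeparableSpace X]
    [MeasurableSpace X] [BorelSpace X]
    (μ : Measure X) [IsLocallyFiniteMeasure μ]
    (htight : ∀ E : Set X, MeasurableSet E → ∀ r : ENNReal, r < μ E →
      ∃ K : Set X, IsCompact K ∧ K ⊆ E ∧ r < μ K)
    (hfs : ∀ U : Set X, IsOpen U → U.Nonempty → 0 < μ U)
    (hns : ∀ x : X, μ {x} = 0) :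
    ∃ F : Set X, (∃ K : ℕ → Set X, (∀ n, IsCompact (K n)) ∧ F = ⋃ n, K n) ∧
      ∀ U : Set X, IsOpen U → U.Nonempty → 0 < μ (F ∩ U) ∧ 0 < μ (U \ F) := by
  rcases isEmpty_or_nonempty X with hX | hX
  · refine ⟨∅, ⟨fun _ => ∅, fun _ => isCompact_empty, by simp⟩, ?_⟩
    intro U hUo hUne
    exact (hX.false hUne.some).elim
  obtain ⟨d, hd⟩ := TopologicalSpace.exists_dense_seq X
  set Useq : ℕ → Set X := fun n => Metric.ball (d n.unpair.1) ((n.unpair.2 + 1 : ℝ))⁻¹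
    with hUseq
  have hU : ∀ n, IsOpen (Useq n) ∧ (Useq n).Nonempty := fun n =>
    ⟨Metric.isOpen_ball, ⟨d n.unpair.1, by simp [hUseq]; positivity⟩⟩
  have hbasis : ∀ V : Set X, IsOpen V → V.Nonempty → ∃ n, 1 ≤ n ∧ Useq n ⊆ V := by
    rintro V hVo ⟨x, hx⟩
    obtain ⟨r, hr, hball⟩ := Metric.isOpen_iff.1 hVo x hx
    obtain ⟨m, hm⟩ := exists_nat_gt (2 / r)
    have hm2 : (2:ℝ) / (m + 2) < r := by
      rw [div_lt_iff₀ (by positivity)]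
      rw [div_lt_iff₀ hr] at hm
      nlinarith
    obtain ⟨i, hi⟩ := Metric.denseRange_iff.1 hd x ((m + 2 : ℝ))⁻¹ (by positivity)
    refine ⟨Nat.pair i (m + 1), ?_, ?_⟩
    · rcases Nat.eq_zero_or_pos (Nat.pair i (m + 1)) with h | h
      · exfalso
        have h2 := Nat.unpair_pair i (m + 1)
        rw [h] at h2
        have h4 := congrArg Prod.snd h2
        norm_num [Nat.unpair] at h4
      · exact h
    · intro y hy
      apply hball
      simp only [hUseq, Nat.unpair_pair, Metric.mem_ball] at hy ⊢
      have h3 : ((m + 1 : ℕ) : ℝ) + 1 = (m:ℝ) + 2 := by push_cast; ring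
      rw [h3] at hy
      calc dist y x ≤ dist y (d i) + dist (d i) x := dist_triangle _ _ _
        _ < ((m:ℝ) + 2)⁻¹ + ((m:ℝ) + 2)⁻¹ := by
            rw [dist_comm (d i) x]; exact add_lt_add hy hi
        _ = 2 / ((m:ℝ) + 2) := by ring
        _ < r := hm2
  set K : ℕ → Set X := fun n => auxNext μ Useq n (auxF μ Useq n) with hKdef
  have hF := auxF_spec μ htight hfs hns hU
  have hKspec : ∀ n, IsCompact (K n) ∧ interior (K n) = ∅ ∧
      K n ⊆ Useq n \ auxF μ Useq n ∧ 0 < μ (K n) ∧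
      μ (K n) < auxEps μ Useq n (auxF μ Useq n) := fun n =>
    auxNext_spec μ htight hfs hns hU (hF n).1.isClosed (hF n).2 n
  have hKF : ∀ i, K i ⊆ auxF μ Useq (i + 1) := fun i => by
    simp only [auxF]; exact subset_union_right
  refine ⟨⋃ n, K n, ⟨K, fun n => (hKspec n).1, rfl⟩, ?_⟩
  intro U hUo hUne
  obtain ⟨n, hn1, hnsub⟩ := hbasis U hUo hUne
  constructor
  · refine lt_of_lt_of_le (hKspec n).2.2.2.1 (measure_mono fun y hy => ?_)
    exact ⟨mem_iUnion.2 ⟨n, hy⟩, hnsub ((hKspec n).2.2.1 hy).1⟩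
  · set A : Set X := Useq n \ auxF μ Useq (n + 1) with hA
    obtain ⟨hAo, hAne⟩ :=
      aux_diff_good (hF (n + 1)).1.isClosed (hF (n + 1)).2 (hU n).1 (hU n).2
    have hApos : 0 < μ A := hfs _ hAo hAne
    set c : ENNReal := min 1 (μ A) with hc
    have hcpos : 0 < c := lt_min one_pos hApos
    have hcne : c ≠ ⊤ := (lt_of_le_of_lt (min_le_left _ _) ENNReal.one_lt_top).ne
    have htail : ∀ m, μ (K (n + 1 + m)) ≤ 2⁻¹ ^ (m + 2) * c := by
      intro m
      refine le_trans (hKspec (n + 1 + m)).2.2.2.2.le ?_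
      rw [auxEps]
      have h1 : (Finset.range (n + 1 + m + 1)).inf
          (fun j => min 1 (μ (Useq j \ auxF μ Useq (n + 1 + m)))) ≤ c := by
        have h0 : (Finset.range (n + 1 + m + 1)).inf
            (fun j => min 1 (μ (Useq j \ auxF μ Useq (n + 1 + m)))) ≤
            min 1 (μ (Useq n \ auxF μ Useq (n + 1 + m))) :=
          Finset.inf_le (Finset.mem_range.2 (by omega))
        refine le_trans h0 (min_le_min le_rfl (measure_mono (diff_subset_diff_right
          (auxF_mono μ (show n + 1 ≤ n + 1 + m by omega)))))
      have h2 : (2⁻¹:ENNReal) ^ (n + 1 + m) ≤ 2⁻¹ ^ (m + 2) :=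
        pow_le_pow_of_le_one (by norm_num) (by norm_num) (by omega)
      exact mul_le_mul' h2 h1
    have hBsum : μ (⋃ m, K (n + 1 + m)) ≤ 2⁻¹ * c := by
      calc μ (⋃ m, K (n + 1 + m)) ≤ ∑' m, μ (K (n + 1 + m)) := measure_iUnion_le _
        _ ≤ ∑' m : ℕ, 2⁻¹ ^ (m + 2) * c := ENNReal.tsum_le_tsum htail
        _ = 2⁻¹ * c := by rw [ENNReal.tsum_mul_right, aux_geom_sum]
    have hhalf : 2⁻¹ * c < c := by
      have := ENNReal.half_lt_self hcpos.ne' hcne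
      rwa [ENNReal.div_eq_inv_mul] at this
    have hlt : μ (⋃ m, K (n + 1 + m)) < μ A :=
      lt_of_le_of_lt hBsum (lt_of_lt_of_le hhalf (min_le_right 1 _))
    have hdiffpos : 0 < μ (A \ ⋃ m, K (n + 1 + m)) :=
      lt_of_lt_of_le (tsub_pos_iff_lt.2 hlt) le_measure_diff
    refine lt_of_lt_of_le hdiffpos (measure_mono ?_)
    rintro y ⟨hyA, hyB⟩
    refine ⟨hnsub hyA.1, fun hyF => ?_⟩
    obtain ⟨i, hyi⟩ := mem_iUnion.1 hyF
    rcases le_or_gt i n with h | h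
    · exact hyA.2 (auxF_mono μ (show i + 1 ≤ n + 1 by omega) (hKF i hyi))
    · exact hyB (mem_iUnion.2 ⟨i - (n + 1), by
        rwa [show n + 1 + (i - (n + 1)) = i by omega]⟩)
end

section
/- Work in ℝⁿ (n ≥ 1) with the Lebesgue measure λ and the ℓᵖ metric for any fixed 1 ≤ p ≤ ∞. Let A ⊆ ℝⁿ be Lebesgue-measurable with λ(A) > 0 and λ(ℝⁿ∖A) > 0, and suppose A is solid: the density D_A(x) exists for every x ∈ ℝⁿ. Then the set {x ∈ Fr_μ(A) : D_A(x) = 1/2} is comeager in the subspace Fr_μ(A). In particular there exists a point x with D_A(x) = 1/2, and consequently there is no measurable A ⊆ ℝⁿ with λ(A) > 0 and λ(ℝⁿ∖A) > 0 such that D_A(x) ∈ {0,1} for every x ∈ ℝⁿ. -/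
open MeasureTheory Metric Set Filter Topology
open scoped ENNReal

/-- Borel measurable structure on `ℝⁿ` with the `ℓᵖ` metric. -/
noncomputable instance instMeasPiLp (p : ℝ≥0∞) (n : ℕ) :
    MeasurableSpace (PiLp p fun _ : Fin n => ℝ) := borel _

instance instBorelPiLp (p : ℝ≥0∞) (n : ℕ) :
    BorelSpace (PiLp p fun _ : Fin n => ℝ) := ⟨rfl⟩

/-- Lebesgue measure on `ℝⁿ` with the `ℓᵖ` metric: the pushforward of the Lebesgue measure
on `Fin n → ℝ` along the identity map `(Fin n → ℝ) → PiLp p (fun _ => ℝ)` (which is a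
homeomorphism). -/
noncomputable def pVolume (p : ℝ≥0∞) [Fact (1 ≤ p)] (n : ℕ) :
    Measure (PiLp p fun _ : Fin n => ℝ) :=
  Measure.map (PiLp.continuousLinearEquiv p ℝ (fun _ : Fin n => ℝ)).symm volume

/-- The `μ`-frontier of `A`: the points all of whose open neighborhoods meet both `A` and
its complement in positive measure. -/
def muFrontier {X : Type*} [MetricSpace X] [MeasurableSpace X]
    (μ : Measure X) (A : Set X) : Set X :=
  {x | ∀ U : Set X, IsOpen U → x ∈ U → 0 < μ (A ∩ U) ∧ 0 < μ (U \ A)}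

set_option linter.unusedSectionVars false
set_option maxHeartbeats 1000000

namespace Solid17

variable (p : ℝ≥0∞) [Fact (1 ≤ p)] (n : ℕ)

local notation "X" => PiLp p (fun _ : Fin n => ℝ)
local notation "μv" => pVolume p n
local notation "Euc" => EuclideanSpace ℝ (Fin n)

instance : (pVolume p n).IsAddHaarMeasure := by unfold pVolume; infer_instance

lemma nontrivialX (hn : 1 ≤ n) : Nontrivial X := by
  haveI : Nonempty (Fin n) := ⟨⟨0, hn⟩⟩
  exact (WithLp.equiv p (∀ _ : Fin n, ℝ)).nontrivial

lemma ball_pos {x : X} {r : ℝ} (hr : 0 < r) : 0 < μv (ball x r) :=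
  measure_ball_pos _ _ hr

lemma ball_ne_top {x : X} {r : ℝ} : μv (ball x r) ≠ ∞ := measure_ball_lt_top.ne

variable {p n}

/-- measure of closed ball equals open ball -/
lemma cB_eq_ball (hn : 1 ≤ n) (x : X) (r : ℝ) :
    μv (closedBall x r) = μv (ball x r) := by
  haveI := nontrivialX p n hn
  exact (pVolume p n).addHaar_closedBall_eq_addHaar_ball x r

lemma inter_cB_eq (hn : 1 ≤ n) (A : Set X) (x : X) (r : ℝ) :
    μv (A ∩ closedBall x r) = μv (A ∩ ball x r) := by
  haveI := nontrivialX p n hn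
  refine le_antisymm ?_ (measure_mono (inter_subset_inter_right _ ball_subset_closedBall))
  calc μv (A ∩ closedBall x r) ≤ μv ((A ∩ ball x r) ∪ sphere x r) := by
        apply measure_mono
        intro z hz
        rcases lt_or_eq_of_le (mem_closedBall.mp hz.2) with h | h
        · exact Or.inl ⟨hz.1, mem_ball.mpr h⟩
        · exact Or.inr (mem_sphere.mpr h)
    _ ≤ μv (A ∩ ball x r) + μv (sphere x r) := measure_union_le _ _
    _ = μv (A ∩ ball x r) := by
        rw [(pVolume p n).addHaar_sphere, add_zero]

/-- complement splitting inside a finite-measure measurable chunk -/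
lemma meas_inter_compl (A : Set X) (hA : MeasurableSet A) {S : Set X}
    (hS : MeasurableSet S) (hfin : μv S ≠ ∞) :
    μv (Aᶜ ∩ S) = μv S - μv (A ∩ S) := by
  have h1 : Aᶜ ∩ S = S \ (A ∩ S) := by
    ext z; simp [Set.mem_diff]; tauto
  rw [h1, measure_diff inter_subset_right (hA.inter hS).nullMeasurableSet
    (ne_top_of_le_ne_top hfin (measure_mono inter_subset_right))]

lemma toReal_inter_compl (A : Set X) (hA : MeasurableSet A) {S : Set X}
    (hS : MeasurableSet S) (hfin : μv S ≠ ∞) :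
    (μv (Aᶜ ∩ S)).toReal = (μv S).toReal - (μv (A ∩ S)).toReal := by
  rw [meas_inter_compl A hA hS hfin,
    ENNReal.toReal_sub_of_le (measure_mono inter_subset_right) hfin]

/-- a.e. point of `Aᶜ` has `A`-density zero (with open balls, real-valued ratios). -/
lemma ae_density_zero (hn : 1 ≤ n) (A : Set X) (hA : MeasurableSet A) :
    ∀ᵐ z ∂(pVolume p n).restrict Aᶜ,
      Tendsto (fun s : ℝ => (μv (A ∩ ball z s)).toReal / (μv (ball z s)).toReal)
        (𝓝[>] (0:ℝ)) (𝓝 0) := by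
  filter_upwards [Besicovitch.ae_tendsto_measure_inter_div (pVolume p n) Aᶜ] with z hz
  have h1 : Tendsto (fun r : ℝ => (μv (Aᶜ ∩ closedBall z r) / μv (closedBall z r)).toReal)
      (𝓝[>] (0:ℝ)) (𝓝 1) := (ENNReal.tendsto_toReal (by norm_num : (1:ℝ≥0∞) ≠ ∞)).comp hz
  have h2 : Tendsto (fun r : ℝ => 1 - (μv (Aᶜ ∩ closedBall z r) / μv (closedBall z r)).toReal)
      (𝓝[>] (0:ℝ)) (𝓝 0) := by
    have := h1.const_sub 1
    simpa using this
  refine h2.congr' ?_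
  filter_upwards [self_mem_nhdsWithin] with s (hs : 0 < s)
  have hb : 0 < μv (ball z s) := ball_pos p n hs
  have hbne : (μv (ball z s)).toReal ≠ 0 := by
    simp [ENNReal.toReal_eq_zero_iff, hb.ne', ball_ne_top p n]
  rw [ENNReal.toReal_div, cB_eq_ball hn, inter_cB_eq hn,
    toReal_inter_compl A hA measurableSet_ball (ball_ne_top p n)]
  field_simp
  ring

/-- continuity of `y ↦ μ (A ∩ ball y s)` (as a real number) for fixed `s > 0`. -/
lemma continuous_memA (hn : 1 ≤ n) (A : Set X) (hA : MeasurableSet A) {s : ℝ} (hs : 0 < s) :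
    Continuous fun y : X => (μv (A ∩ ball y s)).toReal := by
  haveI := nontrivialX p n hn
  apply SeqContinuous.continuous
  intro y k hyk
  have key : Tendsto (fun j => μv (A ∩ ball (y j) s)) atTop (𝓝 (μv (A ∩ ball k s))) := by
    apply tendsto_measure_of_ae_tendsto_indicator atTop
      (hA.inter measurableSet_ball) (fun j => hA.inter measurableSet_ball)
      (measurableSet_ball (x := k) (ε := s + 1)) (ball_ne_top p n)
    · filter_upwards [hyk (ball_mem_nhds k one_pos)] with j (hj : y j ∈ ball k 1)
      intro z hz
      have := hz.2
      simp only [mem_ball] at this hj ⊢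
      calc dist z k ≤ dist z (y j) + dist (y j) k := dist_triangle _ _ _
        _ < s + 1 := by linarith
    · have hsph : μv {z : X | dist z k = s} = 0 := (pVolume p n).addHaar_sphere k s
      filter_upwards [compl_mem_ae_iff.mpr hsph] with z (hz : ¬ dist z k = s)
      rcases lt_or_gt_of_ne hz with h | h
      · have : ∀ᶠ j in atTop, dist z (y j) < s := by
          have hd : Tendsto (fun j => dist z (y j)) atTop (𝓝 (dist z k)) :=
            (continuous_dist.comp (continuous_const.prodMk continuous_id)).continuousAt.tendsto.comp
              (by exact hyk) |>.congr (fun j => rfl)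
          exact hd.eventually (eventually_lt_nhds h)
        filter_upwards [this] with j hj
        constructor
        · rintro ⟨hzA, -⟩; exact ⟨hzA, mem_ball.mpr h⟩
        · rintro ⟨hzA, -⟩; exact ⟨hzA, mem_ball.mpr hj⟩
      · have : ∀ᶠ j in atTop, s < dist z (y j) := by
          have hd : Tendsto (fun j => dist z (y j)) atTop (𝓝 (dist z k)) :=
            tendsto_const_nhds.dist hyk
          exact hd.eventually (eventually_gt_nhds h)
        filter_upwards [this] with j hj
        constructor
        · rintro ⟨-, hzB⟩; exact absurd (mem_ball.mp hzB) (by linarith)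
        · rintro ⟨-, hzB⟩; exact absurd (mem_ball.mp hzB) (by linarith)
  exact (ENNReal.tendsto_toReal (by
    exact ne_top_of_le_ne_top (ball_ne_top p n) (measure_mono inter_subset_right))).comp key

/-- the union of all open sets meeting `A` in measure zero -/
def NN (A : Set X) : Set X := ⋃₀ {U : Set X | IsOpen U ∧ μv (A ∩ U) = 0}

lemma NN_open (A : Set X) : IsOpen (NN (p := p) (n := n) A) :=
  isOpen_sUnion fun _ h => h.1

lemma NN_null (A : Set X) : μv (A ∩ NN (p := p) (n := n) A) = 0 := by
  obtain ⟨T, hTc, hTsub, hTU⟩ := TopologicalSpace.isOpen_sUnion_countable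
    {U : Set X | IsOpen U ∧ μv (A ∩ U) = 0} (fun U hU => hU.1)
  have : A ∩ NN (p := p) (n := n) A = ⋃ t ∈ T, A ∩ t := by
    rw [NN, ← hTU, sUnion_eq_biUnion, inter_iUnion₂]
  rw [this]
  refine (measure_biUnion_null_iff hTc).mpr fun t ht => (hTsub ht).2

lemma NN_disjoint (A : Set X) : Disjoint (NN (p := p) (n := n) A) (NN (p := p) (n := n) Aᶜ) := by
  rw [Set.disjoint_left]
  rintro x ⟨U₁, ⟨hU₁o, hU₁n⟩, hxU₁⟩ ⟨U₂, ⟨hU₂o, hU₂n⟩, hxU₂⟩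
  have hsub : U₁ ∩ U₂ ⊆ (A ∩ U₁) ∪ (Aᶜ ∩ U₂) := by
    intro z hz
    by_cases hzA : z ∈ A
    · exact Or.inl ⟨hzA, hz.1⟩
    · exact Or.inr ⟨hzA, hz.2⟩
  have hpos : 0 < μv (U₁ ∩ U₂) := (hU₁o.inter hU₂o).measure_pos _ ⟨x, hxU₁, hxU₂⟩
  have : μv (U₁ ∩ U₂) ≤ 0 := by
    calc μv (U₁ ∩ U₂) ≤ μv ((A ∩ U₁) ∪ (Aᶜ ∩ U₂)) := measure_mono hsub
      _ ≤ μv (A ∩ U₁) + μv (Aᶜ ∩ U₂) := measure_union_le _ _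
      _ = 0 := by rw [hU₁n, hU₂n, add_zero]
  exact absurd this hpos.not_ge

lemma compl_frontier_subset (A : Set X) :
    (muFrontier (pVolume p n) A)ᶜ ⊆ NN (p := p) (n := n) A ∪ NN (p := p) (n := n) Aᶜ := by
  intro x hx
  simp only [muFrontier, mem_compl_iff, mem_setOf_eq, not_forall] at hx
  obtain ⟨U, hUo, hxU, hU⟩ := hx
  rw [not_and_or] at hU
  rcases hU with h | h
  · exact Or.inl ⟨U, ⟨hUo, by simpa using (le_zero_iff.mp (not_lt.mp h))⟩, hxU⟩
  · refine Or.inr ⟨U, ⟨hUo, ?_⟩, hxU⟩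
    have hUA : Aᶜ ∩ U = U \ A := by ext z; simp [mem_diff]; tauto
    rw [hUA]
    simpa using (le_zero_iff.mp (not_lt.mp h))

lemma frontier_isClosed (A : Set X) : IsClosed (muFrontier (pVolume p n) A) := by
  rw [← isOpen_compl_iff]
  rw [isOpen_iff_mem_nhds]
  intro x hx
  simp only [muFrontier, mem_compl_iff, mem_setOf_eq, not_forall] at hx
  obtain ⟨U, hUo, hxU, hU⟩ := hx
  filter_upwards [hUo.mem_nhds hxU] with y hyU
  simp only [muFrontier, mem_compl_iff, mem_setOf_eq, not_forall]
  exact ⟨U, hUo, hyU, hU⟩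

lemma frontier_compl (A : Set X) :
    muFrontier (pVolume p n) Aᶜ = muFrontier (pVolume p n) A := by
  have key : ∀ (U : Set X), U \ Aᶜ = A ∩ U ∧ Aᶜ ∩ U = U \ A := by
    intro U
    constructor
    · ext z; simp [mem_diff]; tauto
    · ext z; simp [mem_diff]; tauto
  ext x
  simp only [muFrontier, mem_setOf_eq]
  constructor <;> intro h U hUo hxU <;> obtain ⟨h1, h2⟩ := h U hUo hxU
  · rw [(key U).2] at h1
    rw [(key U).1] at h2
    exact ⟨h2, h1⟩
  · rw [← (key U).2] at h2
    rw [← (key U).1] at h1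
    exact ⟨h2, h1⟩

open scoped RealInnerProductSpace Pointwise
set_option maxHeartbeats 1000000

/-- **Core geometric lemma**: it is impossible that all frontier points near a given
frontier point see `A` with uniform density `≥ 1/2 + θ` at all small scales. -/
lemma core (hn : 1 ≤ n) (A : Set X) (hA : MeasurableSet A) {θ s₀ ρ : ℝ}
    (hθ : 0 < θ) (hs₀ : 0 < s₀) (hρ : 0 < ρ) {x₁ : X}
    (hx₁ : x₁ ∈ muFrontier (pVolume p n) A)
    (hbound : ∀ y ∈ muFrontier (pVolume p n) A, dist y x₁ < ρ → ∀ s : ℝ, 0 < s → s ≤ s₀ →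
      (1/2 + θ) * (μv (ball y s)).toReal ≤ (μv (A ∩ ball y s)).toReal) : False := by
  classical
  haveI := nontrivialX p n hn
  set F : Set X := muFrontier (pVolume p n) A with hF
  have hFc : IsClosed F := frontier_isClosed A
  -- the comparison linear equivalence with Euclidean space
  set T : X ≃L[ℝ] Euc :=
    (PiLp.continuousLinearEquiv p ℝ (fun _ : Fin n => ℝ)).trans
      (EuclideanSpace.equiv (Fin n) ℝ).symm with hT
  obtain ⟨C₁, hC₁pos, hC₁⟩ : ∃ C, 0 < C ∧ ∀ z z' : X, dist (T z) (T z') ≤ C * dist z z' := by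
    refine ⟨max 1 ‖(T : X →L[ℝ] Euc)‖, lt_of_lt_of_le one_pos (le_max_left _ _), fun z z' => ?_⟩
    calc dist (T z) (T z') = ‖(T : X →L[ℝ] Euc) (z - z')‖ := by
          rw [dist_eq_norm, ← ContinuousLinearEquiv.coe_coe T, map_sub]
      _ ≤ ‖(T : X →L[ℝ] Euc)‖ * ‖z - z'‖ := (T : X →L[ℝ] Euc).le_opNorm _
      _ ≤ _ := by
          rw [← dist_eq_norm]
          apply mul_le_mul_of_nonneg_right (le_max_right _ _) dist_nonneg
  obtain ⟨C₂, hC₂pos, hC₂⟩ : ∃ C, 0 < C ∧ ∀ z z' : X, dist z z' ≤ C * dist (T z) (T z') := by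
    refine ⟨max 1 ‖(T.symm : Euc →L[ℝ] X)‖, lt_of_lt_of_le one_pos (le_max_left _ _), fun z z' => ?_⟩
    calc dist z z' = ‖(T.symm : Euc →L[ℝ] X) (T z - T z')‖ := by
          have hz : (T.symm : Euc →L[ℝ] X) (T z - T z') = z - z' := by simp
          rw [dist_eq_norm, hz]
      _ ≤ ‖(T.symm : Euc →L[ℝ] X)‖ * ‖T z - T z'‖ := (T.symm : Euc →L[ℝ] X).le_opNorm _
      _ ≤ _ := by
          rw [← dist_eq_norm]
          apply mul_le_mul_of_nonneg_right (le_max_right _ _) dist_nonneg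
  set σ : ℝ := ρ / (2 * (C₁ * C₂ + 1)) with hσ
  have hσpos : 0 < σ := div_pos hρ (by positivity)
  have hσρ : σ ≤ ρ := by
    rw [hσ, div_le_iff₀ (by positivity)]
    nlinarith [mul_pos hρ (mul_pos hC₁pos hC₂pos), hρ]
  -- F-points in the window, off A, form a null set
  have hFA0 : μv ((F ∩ ball x₁ ρ) \ A) = 0 := by
    have hGm : MeasurableSet ((F ∩ ball x₁ ρ) \ A) :=
      ((hFc.measurableSet.inter measurableSet_ball).diff hA)
    have hsub : (F ∩ ball x₁ ρ) \ A ⊆ Aᶜ := fun z hz => hz.2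
    have hae : ∀ᵐ z ∂(pVolume p n).restrict Aᶜ, z ∉ (F ∩ ball x₁ ρ) \ A := by
      filter_upwards [ae_density_zero hn A hA] with z hz hzG
      have hz1 : z ∈ F := hzG.1.1
      have hz2 : dist z x₁ < ρ := hzG.1.2
      have hev1 : ∀ᶠ s in 𝓝[>] (0:ℝ),
          (μv (A ∩ ball z s)).toReal / (μv (ball z s)).toReal < 1/2 + θ :=
        hz.eventually_lt_const (by linarith)
      have hev2 : ∀ᶠ s in 𝓝[>] (0:ℝ), s ∈ Set.Ioc (0:ℝ) s₀ :=
        Ioc_mem_nhdsGT_of_mem ⟨le_refl _, hs₀⟩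
      obtain ⟨s, hs1, hs2⟩ := (hev1.and hev2).exists
      have hb := hbound z hz1 hz2 s hs2.1 hs2.2
      have hDpos : (0:ℝ) < (μv (ball z s)).toReal :=
        ENNReal.toReal_pos (ball_pos p n hs2.1).ne' (ball_ne_top p n)
      rw [div_lt_iff₀ hDpos] at hs1
      linarith
    have : (pVolume p n).restrict Aᶜ ((F ∩ ball x₁ ρ) \ A) = 0 := by
      rw [← compl_mem_ae_iff]
      filter_upwards [hae] with z hz
      exact hz
    rw [Measure.restrict_apply hGm] at this
    have heq : ((F ∩ ball x₁ ρ) \ A) ∩ Aᶜ = (F ∩ ball x₁ ρ) \ A := by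
      ext z; simp only [mem_inter_iff, mem_diff, mem_compl_iff]; tauto
    rwa [heq] at this
  -- find a point of `NN A` close to `x₁`
  have hballpos : 0 < μv (ball x₁ σ \ A) := (hx₁ (ball x₁ σ) isOpen_ball (mem_ball_self hσpos)).2
  have hNpos : 0 < μv (NN A ∩ ball x₁ σ) := by
    have hsub : ball x₁ σ \ A ⊆
        (NN A ∩ ball x₁ σ) ∪ ((Aᶜ ∩ NN Aᶜ) ∪ ((F ∩ ball x₁ ρ) \ A)) := by
      intro z hz
      by_cases hzF : z ∈ F
      · exact Or.inr (Or.inr ⟨⟨hzF, lt_of_lt_of_le hz.1 hσρ⟩, hz.2⟩)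
      · rcases compl_frontier_subset A hzF with h | h
        · exact Or.inl ⟨h, hz.1⟩
        · exact Or.inr (Or.inl ⟨hz.2, h⟩)
    by_contra hc
    push_neg at hc
    have hc0 : μv (NN A ∩ ball x₁ σ) = 0 := le_antisymm hc zero_le
    have : μv (ball x₁ σ \ A) = 0 := by
      refine le_antisymm ?_ zero_le
      calc μv (ball x₁ σ \ A) ≤
          μv (NN A ∩ ball x₁ σ) + (μv (Aᶜ ∩ NN Aᶜ) + μv ((F ∩ ball x₁ ρ) \ A)) :=
            le_trans (measure_mono hsub) (le_trans (measure_union_le _ _)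
              (add_le_add le_rfl (measure_union_le _ _)))
        _ = 0 := by
            rw [hc0, hFA0]
            have : μv (Aᶜ ∩ NN Aᶜ) = 0 := by
              have := NN_null (p := p) (n := n) Aᶜ
              exact this
            rw [this]; simp
    exact absurd this hballpos.ne'
  obtain ⟨w, hwN, hwB⟩ := nonempty_of_measure_ne_zero hNpos.ne'
  -- nearest point of F to w, in the euclidean metric
  have hFne : F.Nonempty := ⟨x₁, hx₁⟩
  have hTFc : IsClosed (T '' F) := T.toHomeomorph.isClosedMap _ hFc
  have hwnF : w ∉ F := by
    intro hwF
    obtain ⟨U, ⟨hUo, hUn⟩, hwU⟩ := hwN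
    exact absurd hUn (hwF U hUo hwU).1.ne'
  set t : ℝ := infDist (T w) (T '' F) with ht
  have htpos : 0 < t := by
    rcases lt_or_eq_of_le (infDist_nonneg (x := T w) (s := T '' F)) with h | h
    · exact h
    · exfalso
      have : T w ∈ closure (T '' F) := by
        rw [mem_closure_iff_infDist_zero ⟨T x₁, mem_image_of_mem _ hx₁⟩]
        exact h.symm
      rw [hTFc.closure_eq] at this
      obtain ⟨y, hyF, hy⟩ := this
      exact hwnF (by rwa [← T.injective hy])
  obtain ⟨y₂, hy₂m, hy₂d⟩ := hTFc.exists_infDist_eq_dist ⟨T x₁, mem_image_of_mem _ hx₁⟩ (T w)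
  obtain ⟨y₀, hy₀F, hy₀e⟩ := hy₂m
  rw [← hy₀e] at hy₂d
  -- y₀ is in the window
  have hty : t = dist (T w) (T y₀) := hy₂d
  have htle : t ≤ C₁ * dist w x₁ := by
    rw [ht]
    calc infDist (T w) (T '' F) ≤ dist (T w) (T x₁) :=
          infDist_le_dist_of_mem (mem_image_of_mem _ hx₁)
      _ ≤ C₁ * dist w x₁ := hC₁ _ _
  have hy₀x₁ : dist y₀ x₁ < ρ := by
    have h1 : dist y₀ w ≤ C₂ * dist (T y₀) (T w) := hC₂ _ _
    have h2 : dist (T y₀) (T w) = t := by rw [hty, dist_comm]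
    rw [h2] at h1
    have h3 : dist w x₁ < σ := hwB
    have h4 : C₂ * t ≤ C₂ * (C₁ * dist w x₁) := mul_le_mul_of_nonneg_left htle hC₂pos.le
    have h5 : C₂ * (C₁ * dist w x₁) < C₂ * C₁ * σ := by
      rw [← mul_assoc]
      exact mul_lt_mul_of_pos_left h3 (mul_pos hC₂pos hC₁pos)
    have hcanc : σ * (2 * (C₁ * C₂ + 1)) = ρ := div_mul_cancel₀ _ (by positivity)
    calc dist y₀ x₁ ≤ dist y₀ w + dist w x₁ := dist_triangle _ _ _
      _ < C₂ * t + σ := by linarith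
      _ ≤ C₂ * C₁ * σ + σ := by linarith
      _ ≤ ρ := by nlinarith [hσpos, mul_pos (mul_pos hC₁pos hC₂pos) hσpos]
  -- the euclidean ball around `w` of radius `t`, transported back to `X`
  set B2 : Set X := T ⁻¹' (ball (T w) t) with hB2
  have hB2open : IsOpen B2 := isOpen_ball.preimage T.continuous
  have hwB2 : w ∈ B2 := by
    simp only [hB2, mem_preimage, mem_ball, dist_self]
    exact htpos
  have hB2F : ∀ z ∈ F, z ∉ B2 := by
    intro z hzF hzB2
    have h1 : t ≤ dist (T w) (T z) := infDist_le_dist_of_mem (mem_image_of_mem _ hzF)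
    rw [hB2, mem_preimage, mem_ball, dist_comm] at hzB2
    linarith
  have hB2N : B2 ⊆ NN A := by
    have hconv : Convex ℝ B2 := by
      have := (convex_ball (T w) t).linear_preimage (T.toLinearEquiv : X →ₗ[ℝ] Euc)
      simpa [hB2] using this
    refine IsPreconnected.subset_left_of_subset_union (NN_open A) (NN_open Aᶜ)
      (NN_disjoint A) ?_ ⟨w, hwB2, hwN⟩ hconv.isPreconnected
    intro z hz
    by_cases hzF : z ∈ F
    · exact absurd hz (hB2F z hzF)
    · exact compl_frontier_subset A hzF
  have hB2A : μv (A ∩ B2) = 0 :=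
    le_antisymm (le_trans (measure_mono (inter_subset_inter_right _ hB2N))
      (NN_null A).le) zero_le
  -- the normal vector
  set b : Euc := T y₀ - T w with hb
  have hbnorm : ‖b‖ = t := by
    rw [hb, ← dist_eq_norm, dist_comm]
    exact hty.symm
  -- half spaces and hyperplane
  set HH : Set X := {u : X | ⟪b, T u⟫ < 0} with hHH
  set HH' : Set X := {u : X | 0 < ⟪b, T u⟫} with hHH'
  set P : Set X := {u : X | ⟪b, T u⟫ = 0} with hP
  have hinner_cont : Continuous fun u : X => ⟪b, T u⟫ :=
    continuous_const.inner T.continuous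
  have hHHopen : IsOpen HH := isOpen_lt hinner_cont continuous_const
  have hHH'open : IsOpen HH' := isOpen_lt continuous_const hinner_cont
  have hPnull : μv P = 0 := by
    set ψ : X →ₗ[ℝ] ℝ := ((innerSL ℝ b).comp (T : X →L[ℝ] Euc)).toLinearMap with hψ
    have hPker : P = (LinearMap.ker ψ : Submodule ℝ X) := by
      ext u
      simp [hP, hψ, LinearMap.mem_ker]
    rw [hPker]
    apply Measure.addHaar_submodule
    intro hker
    have hmem := Submodule.eq_top_iff'.mp hker (T.symm b)
    rw [LinearMap.mem_ker] at hmem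
    have heval : ψ (T.symm b) = ⟪b, b⟫ := by simp [hψ]
    rw [heval, real_inner_self_eq_norm_sq, hbnorm] at hmem
    nlinarith [htpos]
  -- the unit ball
  set S01 : Set X := ball (0 : X) 1 with hS01
  have hS01meas : MeasurableSet S01 := measurableSet_ball
  have hS01ne : μv S01 ≠ ∞ := ball_ne_top p n
  have hS01pos : 0 < μv S01 := ball_pos p n one_pos
  have hfinHH : μv (S01 ∩ HH) ≠ ∞ := ne_top_of_le_ne_top hS01ne (measure_mono inter_subset_left)
  -- reflection: the half space cuts the unit ball exactly in half
  have hhalf : (μv (S01 ∩ HH)).toReal = (μv S01).toReal / 2 := by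
    have hrefl : μv (S01 ∩ HH') = μv (S01 ∩ HH) := by
      have hseteq : (-1 : ℝ) • (S01 ∩ HH) = S01 ∩ HH' := by
        ext u
        rw [Set.mem_smul_set_iff_inv_smul_mem₀ (by norm_num : (-1:ℝ) ≠ 0)]
        simp only [hS01, hHH, hHH', mem_inter_iff, mem_ball, dist_zero_right, mem_setOf_eq,
          inv_neg, inv_one, neg_smul, one_smul, norm_neg, map_neg, inner_neg_right]
        constructor
        · rintro ⟨h1, h2⟩; exact ⟨h1, by linarith⟩
        · rintro ⟨h1, h2⟩; exact ⟨h1, by linarith⟩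
      have hsmul := (pVolume p n).addHaar_smul (-1 : ℝ) (S01 ∩ HH)
      rw [hseteq] at hsmul
      rw [hsmul]
      simp [abs_pow]
    have hcover : S01 ⊆ (S01 ∩ HH) ∪ ((S01 ∩ HH') ∪ (S01 ∩ P)) := by
      intro u hu
      rcases lt_trichotomy (⟪b, T u⟫) 0 with h | h | h
      · exact Or.inl ⟨hu, h⟩
      · exact Or.inr (Or.inr ⟨hu, h⟩)
      · exact Or.inr (Or.inl ⟨hu, h⟩)
    have hPz : μv (S01 ∩ P) = 0 :=
      le_antisymm (le_trans (measure_mono inter_subset_right) hPnull.le) zero_le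
    have hdisj : Disjoint (S01 ∩ HH) (S01 ∩ HH') := by
      rw [Set.disjoint_left]
      rintro u ⟨-, h1⟩ ⟨-, h2⟩
      rw [hHH, mem_setOf_eq] at h1
      rw [hHH', mem_setOf_eq] at h2
      linarith
    have hup : μv S01 ≤ μv (S01 ∩ HH) + μv (S01 ∩ HH') := by
      calc μv S01 ≤ μv (S01 ∩ HH) + (μv (S01 ∩ HH') + μv (S01 ∩ P)) :=
            le_trans (measure_mono hcover) (le_trans (measure_union_le _ _)
              (add_le_add le_rfl (measure_union_le _ _)))
        _ = μv (S01 ∩ HH) + μv (S01 ∩ HH') := by rw [hPz, add_zero]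
    have hdown : μv (S01 ∩ HH) + μv (S01 ∩ HH') ≤ μv S01 := by
      rw [← measure_union hdisj (hS01meas.inter hHH'open.measurableSet)]
      exact measure_mono (union_subset inter_subset_left inter_subset_left)
    have heqm : μv S01 = μv (S01 ∩ HH) + μv (S01 ∩ HH) := by
      rw [le_antisymm hup hdown, hrefl]
    have := congrArg ENNReal.toReal heqm
    rw [ENNReal.toReal_add hfinHH hfinHH] at this
    linarith
  -- the scales
  set sk : ℕ → ℝ := fun k => s₀ / (k + 1) with hsk
  have hskpos : ∀ k, 0 < sk k := fun k => div_pos hs₀ (by positivity)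
  have hsks₀ : ∀ k, sk k ≤ s₀ := by
    intro k
    apply div_le_self hs₀.le
    have h0 : (0:ℝ) ≤ (k:ℝ) := Nat.cast_nonneg k
    linarith
  have hsk0 : Tendsto sk atTop (𝓝 0) := by
    have h1 : Tendsto (fun k : ℕ => s₀ / ((k + 1 : ℕ) : ℝ)) atTop (𝓝 0) :=
      (tendsto_const_div_atTop_nhds_zero_nat s₀).comp (tendsto_add_atTop_nat 1)
    refine h1.congr fun k => ?_
    push_cast
    rfl
  -- the rescaled euclidean-ball sets
  set WW : ℝ → Set X := fun s => (fun u : X => y₀ + s • u) ⁻¹' B2 with hWW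
  have hWWopen : ∀ s : ℝ, IsOpen (WW s) := fun s =>
    hB2open.preimage (continuous_const.add (continuous_id.const_smul s))
  have hWWmem : ∀ s : ℝ, 0 < s → ∀ u : X,
      (u ∈ WW s ↔ 2 * ⟪b, T u⟫ + s * ‖T u‖^2 < 0) := by
    intro s hs u
    rw [hWW]
    simp only [mem_preimage, hB2, mem_ball]
    have hTeq : T (y₀ + s • u) - T w = b + s • T u := by
      rw [map_add, _root_.map_smul, hb]
      abel
    rw [dist_eq_norm, hTeq, show t = ‖b‖ from hbnorm.symm]
    have hexp : ‖b + s • T u‖^2 = ‖b‖^2 + s * (2 * ⟪b, T u⟫ + s * ‖T u‖^2) := by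
      rw [norm_add_sq_real, real_inner_smul_right, norm_smul, Real.norm_eq_abs, abs_of_pos hs,
        mul_pow]
      ring
    constructor
    · intro h
      have h2 : ‖b + s • T u‖^2 < ‖b‖^2 :=
        pow_lt_pow_left₀ h (norm_nonneg _) (by norm_num)
      rw [hexp] at h2
      by_contra hge
      push_neg at hge
      nlinarith [mul_nonneg hs.le hge]
    · intro h
      have h2 : ‖b + s • T u‖^2 < ‖b‖^2 := by
        rw [hexp]
        nlinarith [mul_pos hs (neg_pos.mpr h)]
      exact lt_of_pow_lt_pow_left₀ 2 (norm_nonneg _) h2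
  -- rescaling identities
  have hpre1 : ∀ s : ℝ, 0 < s → (fun u : X => y₀ + s • u) ⁻¹' (ball y₀ s) = S01 := by
    intro s hs
    ext u
    have hd : dist (y₀ + s • u) y₀ = s * ‖u‖ := by
      rw [dist_eq_norm, add_sub_cancel_left, norm_smul, Real.norm_eq_abs, abs_of_pos hs]
    rw [mem_preimage, mem_ball, hd, hS01, mem_ball, dist_zero_right,
      mul_lt_iff_lt_one_right hs]
  have hscale : ∀ s : ℝ, 0 < s → ∀ S : Set X,
      μv ((fun u : X => y₀ + s • u) ⁻¹' S)
        = ENNReal.ofReal ((s ^ Module.finrank ℝ (PiLp p fun _ : Fin n => ℝ))⁻¹) * μv S := by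
    intro s hs S
    have hcomp : (fun u : X => y₀ + s • u) = (fun v : X => y₀ + v) ∘ (fun u : X => s • u) := rfl
    rw [hcomp, preimage_comp, (pVolume p n).addHaar_preimage_smul hs.ne',
      measure_preimage_add, abs_of_pos (by positivity)]
  have hfrac : ∀ s : ℝ, 0 < s →
      (μv (ball y₀ s ∩ B2)).toReal / (μv (ball y₀ s)).toReal
        = (μv (S01 ∩ WW s)).toReal / (μv S01).toReal := by
    intro s hs
    have h1 : (fun u : X => y₀ + s • u) ⁻¹' (ball y₀ s ∩ B2) = S01 ∩ WW s := by
      rw [preimage_inter, hpre1 s hs]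
    have h2 := hscale s hs (ball y₀ s ∩ B2)
    rw [h1] at h2
    have h3 := hscale s hs (ball y₀ s)
    rw [hpre1 s hs] at h3
    have hcpos : (0:ℝ) < (s ^ Module.finrank ℝ (PiLp p fun _ : Fin n => ℝ))⁻¹ := by positivity
    rw [h2, h3, ENNReal.toReal_mul, ENNReal.toReal_mul, ENNReal.toReal_ofReal hcpos.le,
      mul_div_mul_left _ _ hcpos.ne']
  -- the measures of the rescaled sets converge to that of the half-space cut
  have hWlim : Tendsto (fun k => μv (S01 ∩ WW (sk k))) atTop (𝓝 (μv (S01 ∩ HH))) := by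
    apply tendsto_measure_of_ae_tendsto_indicator atTop
      (hS01meas.inter hHHopen.measurableSet)
      (fun k => hS01meas.inter (hWWopen (sk k)).measurableSet)
      hS01meas hS01ne (Eventually.of_forall fun k => inter_subset_left)
    filter_upwards [compl_mem_ae_iff.mpr hPnull] with u hu
    have hune : ⟪b, T u⟫ ≠ 0 := by simpa [hP] using hu
    rcases lt_or_gt_of_ne hune with hneg | hpos
    · have hev : ∀ᶠ k in atTop, 2 * ⟪b, T u⟫ + sk k * ‖T u‖^2 < 0 := by
        have hlim' : Tendsto (fun k => 2 * ⟪b, T u⟫ + sk k * ‖T u‖^2) atTop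
            (𝓝 (2 * ⟪b, T u⟫ + 0 * ‖T u‖^2)) :=
          tendsto_const_nhds.add (hsk0.mul_const _)
        exact hlim'.eventually_lt_const (by nlinarith)
      filter_upwards [hev] with k hk
      constructor
      · rintro ⟨h1, -⟩; exact ⟨h1, hneg⟩
      · rintro ⟨h1, -⟩; exact ⟨h1, (hWWmem (sk k) (hskpos k) u).mpr hk⟩
    · refine Eventually.of_forall fun k => ?_
      constructor
      · rintro ⟨h1, h2⟩
        exfalso
        have := (hWWmem (sk k) (hskpos k) u).mp h2
        nlinarith [mul_nonneg (hskpos k).le (sq_nonneg ‖T u‖)]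
      · rintro ⟨h1, h2⟩
        rw [hHH, mem_setOf_eq] at h2
        linarith
  -- pass to real ratios
  have hS01Rpos : 0 < (μv S01).toReal := ENNReal.toReal_pos hS01pos.ne' hS01ne
  have hratio : Tendsto (fun k => (μv (S01 ∩ WW (sk k))).toReal / (μv S01).toReal) atTop
      (𝓝 (1/2 : ℝ)) := by
    have h1 : Tendsto (fun k => (μv (S01 ∩ WW (sk k))).toReal) atTop
        (𝓝 ((μv (S01 ∩ HH)).toReal)) := (ENNReal.tendsto_toReal hfinHH).comp hWlim
    have h2 := h1.div_const ((μv S01).toReal)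
    rw [hhalf] at h2
    have h3 : (μv S01).toReal / 2 / (μv S01).toReal = 1/2 := by
      field_simp
    rwa [h3] at h2
  obtain ⟨k, hk⟩ := (hratio.eventually_const_lt (show 1/2 - θ < 1/2 by linarith)).exists
  -- final contradiction at scale `sk k`
  set s := sk k with hsdef
  have hsp : 0 < s := hskpos k
  have hbnd := hbound y₀ hy₀F hy₀x₁ s hsp (hsks₀ k)
  have hDs : 0 < (μv (ball y₀ s)).toReal :=
    ENNReal.toReal_pos (ball_pos p n hsp).ne' (ball_ne_top p n)
  have h6 : μv (A ∩ ball y₀ s) + μv (ball y₀ s ∩ B2) ≤ μv (ball y₀ s) := by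
    have e1 : μv (ball y₀ s ∩ B2) ≤ μv (ball y₀ s \ A) := by
      calc μv (ball y₀ s ∩ B2) ≤ μv ((ball y₀ s \ A) ∪ (A ∩ B2)) := by
            apply measure_mono
            intro z hz
            by_cases hzA : z ∈ A
            · exact Or.inr ⟨hzA, hz.2⟩
            · exact Or.inl ⟨hz.1, hzA⟩
        _ ≤ μv (ball y₀ s \ A) + μv (A ∩ B2) := measure_union_le _ _
        _ = μv (ball y₀ s \ A) := by rw [hB2A, add_zero]
    calc μv (A ∩ ball y₀ s) + μv (ball y₀ s ∩ B2)
        ≤ μv (ball y₀ s ∩ A) + μv (ball y₀ s \ A) := by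
          rw [inter_comm]
          exact add_le_add le_rfl e1
      _ = μv (ball y₀ s) := measure_inter_add_diff _ hA
  have h7 : (μv (A ∩ ball y₀ s)).toReal + (μv (ball y₀ s ∩ B2)).toReal
      ≤ (μv (ball y₀ s)).toReal := by
    rw [← ENNReal.toReal_add (ne_top_of_le_ne_top (ball_ne_top p n)
      (measure_mono inter_subset_right)) (ne_top_of_le_ne_top (ball_ne_top p n)
      (measure_mono inter_subset_left))]
    exact ENNReal.toReal_mono (ball_ne_top p n) h6
  have h8 : (μv (ball y₀ s ∩ B2)).toReal
      = ((μv (S01 ∩ WW s)).toReal / (μv S01).toReal) * (μv (ball y₀ s)).toReal := by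
    rw [← hfrac s hsp, div_mul_cancel₀ _ hDs.ne']
  have h9 := mul_lt_mul_of_pos_right hk hDs
  rw [← h8] at h9
  linarith

lemma continuous_ballvol (hn : 1 ≤ n) {s : ℝ} (hs : 0 < s) :
    Continuous fun y : X => (μv (ball y s)).toReal := by
  have := continuous_memA hn (univ : Set X) MeasurableSet.univ hs
  simpa [univ_inter] using this

lemma frontier_nonempty (A : Set X) (hApos : 0 < μv A) (hAcpos : 0 < μv Aᶜ) :
    (muFrontier (pVolume p n) A).Nonempty := by
  by_contra h
  rw [Set.not_nonempty_iff_eq_empty] at h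
  have hcov : (univ : Set X) ⊆ NN A ∪ NN Aᶜ := fun z _ =>
    compl_frontier_subset A (by simp [h])
  have hCCne : (NN (p := p) (n := n) Aᶜ).Nonempty := by
    have h1 : 0 < μv (A ∩ NN Aᶜ) := by
      have h2 : μv A ≤ μv (A ∩ NN A) + μv (A ∩ NN Aᶜ) := by
        calc μv A = μv (A ∩ (NN A ∪ NN Aᶜ)) := by
              rw [inter_eq_self_of_subset_left ((subset_univ A).trans hcov)]
          _ = μv ((A ∩ NN A) ∪ (A ∩ NN Aᶜ)) := by rw [inter_union_distrib_left]
          _ ≤ _ := measure_union_le _ _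
      rw [NN_null A, zero_add] at h2
      exact lt_of_lt_of_le hApos h2
    obtain ⟨z, hz⟩ := nonempty_of_measure_ne_zero h1.ne'
    exact ⟨z, hz.2⟩
  have hNNne : (NN (p := p) (n := n) A).Nonempty := by
    have h1 : 0 < μv (Aᶜ ∩ NN A) := by
      have h2 : μv Aᶜ ≤ μv (Aᶜ ∩ NN A) + μv (Aᶜ ∩ NN Aᶜ) := by
        calc μv Aᶜ = μv (Aᶜ ∩ (NN A ∪ NN Aᶜ)) := by
              rw [inter_eq_self_of_subset_left ((subset_univ Aᶜ).trans hcov)]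
          _ = μv ((Aᶜ ∩ NN A) ∪ (Aᶜ ∩ NN Aᶜ)) := by rw [inter_union_distrib_left]
          _ ≤ _ := measure_union_le _ _
      rw [NN_null Aᶜ, add_zero] at h2
      exact lt_of_lt_of_le hAcpos h2
    obtain ⟨z, hz⟩ := nonempty_of_measure_ne_zero h1.ne'
    exact ⟨z, hz.2⟩
  obtain ⟨z₀, hz₀⟩ := hNNne
  have hsub : (univ : Set X) ⊆ NN A :=
    IsPreconnected.subset_left_of_subset_union (NN_open A) (NN_open Aᶜ)
      (NN_disjoint A) hcov ⟨z₀, mem_univ _, hz₀⟩ convex_univ.isPreconnected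
  obtain ⟨z, hz⟩ := hCCne
  exact absurd hz (Set.disjoint_left.mp (NN_disjoint A) (hsub (mem_univ z)))

/-- Master lemma: both conclusions about the set `A` itself. -/
lemma master (hn : 1 ≤ n) (A : Set X) (hA : MeasurableSet A)
    (hApos : 0 < μv A) (hAcpos : 0 < μv Aᶜ)
    (hsolid : ∀ x : X, ∃ v : ℝ, HasDensity (pVolume p n) A x v) :
    ({x : ↥(muFrontier (pVolume p n) A) | HasDensity (pVolume p n) A (↑x) (1/2)} ∈
      residual ↥(muFrontier (pVolume p n) A)) ∧
    ∃ x : X, HasDensity (pVolume p n) A x (1/2) := by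
  classical
  have hFc : IsClosed (muFrontier (pVolume p n) A) := frontier_isClosed A
  haveI : CompleteSpace ↥(muFrontier (pVolume p n) A) := hFc.completeSpace_coe
  choose dfun hd using hsolid
  set F := muFrontier (pVolume p n) A with hF
  -- upper and lower exceptional closed sets
  set CU : ℕ → Set ↥F := fun m => {x : ↥F | ∀ s : ℝ, 0 < s → s ≤ 1/(m+1) →
    (1/2 + 1/(m+1)) * (μv (ball (↑x : X) s)).toReal ≤ (μv (A ∩ ball (↑x : X) s)).toReal}
    with hCU
  set CL : ℕ → Set ↥F := fun m => {x : ↥F | ∀ s : ℝ, 0 < s → s ≤ 1/(m+1) →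
    (μv (A ∩ ball (↑x : X) s)).toReal ≤ (1/2 - 1/(m+1)) * (μv (ball (↑x : X) s)).toReal}
    with hCL
  have hCUc : ∀ m, IsClosed (CU m) := by
    intro m
    have heq : CU m = ⋂ s : ℝ, {x : ↥F | 0 < s → s ≤ 1/(m+1) →
        (1/2 + 1/(m+1)) * (μv (ball (↑x : X) s)).toReal ≤ (μv (A ∩ ball (↑x : X) s)).toReal} := by
      ext x
      simp only [hCU, mem_setOf_eq, mem_iInter]
    rw [heq]
    refine isClosed_iInter fun s => ?_
    by_cases h0 : 0 < s
    · by_cases h1 : s ≤ 1/(m+1)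
      · have heq2 : {x : ↥F | 0 < s → s ≤ 1/(m+1) →
            (1/2 + 1/(m+1)) * (μv (ball (↑x : X) s)).toReal ≤ (μv (A ∩ ball (↑x : X) s)).toReal} = {x : ↥F |
            (1/2 + 1/(m+1)) * (μv (ball (↑x : X) s)).toReal ≤ (μv (A ∩ ball (↑x : X) s)).toReal} := by
          ext x
          simp only [mem_setOf_eq, h0, h1, forall_true_left, true_implies]
        rw [heq2]
        exact isClosed_le (continuous_const.mul ((continuous_ballvol hn h0).comp continuous_subtype_val)) ((continuous_memA hn A hA h0).comp continuous_subtype_val)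
      · refine isClosed_of_closure_subset fun x hx => ?_
        exact fun hs1 hs2 => absurd hs2 h1
    · refine isClosed_of_closure_subset fun x hx => ?_
      exact fun hs1 hs2 => absurd hs1 h0
  have hCLc : ∀ m, IsClosed (CL m) := by
    intro m
    have heq : CL m = ⋂ s : ℝ, {x : ↥F | 0 < s → s ≤ 1/(m+1) →
        (μv (A ∩ ball (↑x : X) s)).toReal ≤ (1/2 - 1/(m+1)) * (μv (ball (↑x : X) s)).toReal} := by
      ext x
      simp only [hCL, mem_setOf_eq, mem_iInter]
    rw [heq]
    refine isClosed_iInter fun s => ?_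
    by_cases h0 : 0 < s
    · by_cases h1 : s ≤ 1/(m+1)
      · have heq2 : {x : ↥F | 0 < s → s ≤ 1/(m+1) →
            (μv (A ∩ ball (↑x : X) s)).toReal ≤ (1/2 - 1/(m+1)) * (μv (ball (↑x : X) s)).toReal} = {x : ↥F |
            (μv (A ∩ ball (↑x : X) s)).toReal ≤ (1/2 - 1/(m+1)) * (μv (ball (↑x : X) s)).toReal} := by
          ext x
          simp only [mem_setOf_eq, h0, h1, forall_true_left, true_implies]
        rw [heq2]
        exact isClosed_le ((continuous_memA hn A hA h0).comp continuous_subtype_val) (continuous_const.mul ((continuous_ballvol hn h0).comp continuous_subtype_val))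
      · refine isClosed_of_closure_subset fun x hx => ?_
        exact fun hs1 hs2 => absurd hs2 h1
    · refine isClosed_of_closure_subset fun x hx => ?_
      exact fun hs1 hs2 => absurd hs1 h0
  have hmpos : ∀ m : ℕ, (0:ℝ) < 1/(m+1) := by intro m; positivity
  -- the exceptional sets have empty interior (by the core lemma)
  have hCUe : ∀ m, interior (CU m) = ∅ := by
    intro m
    rw [eq_empty_iff_forall_notMem]
    intro x hx
    rw [mem_interior_iff_mem_nhds, Metric.mem_nhds_iff] at hx
    obtain ⟨ε, hε, hball⟩ := hx
    refine core hn A hA (hmpos m) (hmpos m) hε (x.2 : (↑x : X) ∈ muFrontier (pVolume p n) A) ?_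
    intro y hyF hyd s hs1 hs2
    have hy : (⟨y, hyF⟩ : ↥F) ∈ ball x ε := by
      rw [mem_ball, Subtype.dist_eq]; exact hyd
    exact hball hy s hs1 hs2
  have hCLe : ∀ m, interior (CL m) = ∅ := by
    intro m
    rw [eq_empty_iff_forall_notMem]
    intro x hx
    rw [mem_interior_iff_mem_nhds, Metric.mem_nhds_iff] at hx
    obtain ⟨ε, hε, hball⟩ := hx
    have hx₁c : (↑x : X) ∈ muFrontier (pVolume p n) Aᶜ := by
      rw [frontier_compl]; exact x.2
    refine core hn Aᶜ hA.compl (hmpos m) (hmpos m) hε hx₁c ?_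
    intro y hyF hyd s hs1 hs2
    have hyF' : y ∈ F := by rw [hF, ← frontier_compl]; exact hyF
    have hy : (⟨y, hyF'⟩ : ↥F) ∈ ball x ε := by
      rw [mem_ball, Subtype.dist_eq]; exact hyd
    have hcl := hball hy s hs1 hs2
    have hD := toReal_inter_compl A hA (S := ball y s) measurableSet_ball (ball_ne_top p n)
    rw [hD]
    linarith
  -- the residual set
  set R : Set ↥F := ⋂ m : ℕ, ((CU m)ᶜ ∩ (CL m)ᶜ) with hR
  have hRopen : ∀ m : ℕ, IsOpen ((CU m)ᶜ ∩ (CL m)ᶜ) := fun m =>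
    (hCUc m).isOpen_compl.inter (hCLc m).isOpen_compl
  have hRdense : Dense R := by
    apply dense_iInter_of_isOpen hRopen
    intro m
    have h1 : Dense (CU m)ᶜ := interior_eq_empty_iff_dense_compl.mp (hCUe m)
    have h2 : Dense (CL m)ᶜ := interior_eq_empty_iff_dense_compl.mp (hCLe m)
    exact h1.inter_of_isOpen_left h2 (hCUc m).isOpen_compl
  have hRsub : R ⊆ {x : ↥F | HasDensity (pVolume p n) A (↑x : X) (1/2)} := by
    intro x hxR
    have hdx := hd (↑x : X)
    have hval : dfun (↑x : X) = 1/2 := by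
      by_contra hne
      rcases lt_or_gt_of_ne hne with hlt | hgt
      · -- low density: `x` would be in some `CL m`
        set γ : ℝ := (1/2 - dfun (↑x : X))/2 with hγ
        have hγpos : 0 < γ := by rw [hγ]; linarith
        have hev : ∀ᶠ e in 𝓝[>] (0:ℝ),
            (μv (A ∩ ball (↑x : X) e)).toReal / (μv (ball (↑x : X) e)).toReal < 1/2 - γ :=
          hdx.eventually_lt_const (by rw [hγ]; linarith)
        obtain ⟨ε₁, hε₁, hsub₁⟩ := Metric.mem_nhdsWithin_iff.mp hev
        obtain ⟨m, hm⟩ := exists_nat_one_div_lt (lt_min_iff.mpr ⟨hγpos, hε₁⟩)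
        have hxCL : x ∈ CL m := by
          intro s hs1 hs2
          have hsε : s ∈ ball (0:ℝ) ε₁ ∩ Ioi 0 := by
            constructor
            · rw [mem_ball, dist_zero_right, Real.norm_eq_abs, abs_of_pos hs1]
              exact lt_of_le_of_lt hs2 (lt_of_lt_of_le hm (min_le_right _ _))
            · exact hs1
          have hr := hsub₁ hsε
          have hD : 0 < (μv (ball (↑x : X) s)).toReal :=
            ENNReal.toReal_pos (ball_pos p n hs1).ne' (ball_ne_top p n)
          rw [mem_setOf_eq, div_lt_iff₀ hD] at hr
          have hγm : 1/((m:ℝ)+1) ≤ γ := le_of_lt (lt_of_lt_of_le hm (min_le_left _ _))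
          nlinarith [hD]
        exact (mem_iInter.mp hxR m).2 hxCL
      · -- high density: `x` would be in some `CU m`
        set γ : ℝ := (dfun (↑x : X) - 1/2)/2 with hγ
        have hγpos : 0 < γ := by rw [hγ]; linarith
        have hev : ∀ᶠ e in 𝓝[>] (0:ℝ),
            1/2 + γ < (μv (A ∩ ball (↑x : X) e)).toReal / (μv (ball (↑x : X) e)).toReal :=
          hdx.eventually_const_lt (by rw [hγ]; linarith)
        obtain ⟨ε₁, hε₁, hsub₁⟩ := Metric.mem_nhdsWithin_iff.mp hev
        obtain ⟨m, hm⟩ := exists_nat_one_div_lt (lt_min_iff.mpr ⟨hγpos, hε₁⟩)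
        have hxCU : x ∈ CU m := by
          intro s hs1 hs2
          have hsε : s ∈ ball (0:ℝ) ε₁ ∩ Ioi 0 := by
            constructor
            · rw [mem_ball, dist_zero_right, Real.norm_eq_abs, abs_of_pos hs1]
              exact lt_of_le_of_lt hs2 (lt_of_lt_of_le hm (min_le_right _ _))
            · exact hs1
          have hr := hsub₁ hsε
          have hD : 0 < (μv (ball (↑x : X) s)).toReal :=
            ENNReal.toReal_pos (ball_pos p n hs1).ne' (ball_ne_top p n)
          rw [mem_setOf_eq, lt_div_iff₀ hD] at hr
          have hγm : 1/((m:ℝ)+1) ≤ γ := le_of_lt (lt_of_lt_of_le hm (min_le_left _ _))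
          nlinarith [hD]
        exact (mem_iInter.mp hxR m).1 hxCU
    rw [mem_setOf_eq, ← hval]
    exact hdx
  constructor
  · rw [mem_residual]
    refine ⟨R, hRsub, ?_, hRdense⟩
    exact IsGδ.iInter fun m => (hRopen m).isGδ
  · have hFne := frontier_nonempty A hApos hAcpos
    haveI : Nonempty ↥F := hFne.to_subtype
    obtain ⟨x, hx⟩ := hRdense.nonempty
    exact ⟨(↑x : X), hRsub hx⟩

end Solid17


/-- **Solid subsets of `ℝⁿ` (with any `ℓᵖ` metric) have density `1/2` at comeager many
points of their `μ`-frontier.** If `A ⊆ ℝⁿ` is measurable with `λ(A) > 0` and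
`λ(ℝⁿ∖A) > 0`, and the density `D_A(x)` exists at every point, then
`{x ∈ Fr_μ(A) | D_A(x) = 1/2}` is comeager in `Fr_μ(A)`; in particular some point has
density `1/2`, and consequently there is no nontrivial measurable set whose density is `0`
or `1` at every point. -/
theorem stmt_17 (n : ℕ) (hn : 1 ≤ n) (p : ℝ≥0∞) [Fact (1 ≤ p)]
    (A : Set (PiLp p fun _ : Fin n => ℝ)) (hA : MeasurableSet A)
    (hApos : 0 < pVolume p n A) (hAcpos : 0 < pVolume p n Aᶜ)
    (hsolid : ∀ x, ∃ v : ℝ, HasDensity (pVolume p n) A x v) :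
    {x : ↥(muFrontier (pVolume p n) A) |
        HasDensity (pVolume p n) A (↑x) (1 / 2)} ∈
      residual ↥(muFrontier (pVolume p n) A) ∧
    (∃ x, HasDensity (pVolume p n) A x (1 / 2)) ∧
    ∀ A' : Set (PiLp p fun _ : Fin n => ℝ), MeasurableSet A' →
      0 < pVolume p n A' → 0 < pVolume p n A'ᶜ →
      ¬ ∀ x, HasDensity (pVolume p n) A' x 0 ∨ HasDensity (pVolume p n) A' x 1 := by
  obtain ⟨h1, h2⟩ := Solid17.master hn A hA hApos hAcpos hsolid
  refine ⟨h1, h2, ?_⟩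
  intro A' hA' hpos' hcpos' hall
  obtain ⟨x, hx⟩ := (Solid17.master hn A' hA' hpos' hcpos'
    (fun x => (hall x).elim (fun h => ⟨0, h⟩) (fun h => ⟨1, h⟩))).2
  rcases hall x with h | h
  · have := tendsto_nhds_unique hx h
    norm_num at this
  · have := tendsto_nhds_unique hx h
    norm_num at this
end
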